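/- arXiv:2509.10880 — 4 statements merged into one kernel-verified Lean document; each statement's English description precedes it below -/
import Mathlib

section
/- Suppose that for some k ∈ ℤ there exist u ∈ N(4,F) and y ∈ J_f such that α(r,h,x) = u · β_f^k · y. Then k = 0 or k = 2. (Equivalently: if k is not equal to 0 or 2, then the matrix α(r,h,x) does not lie in the double coset N(4,F)·β_f^k·J_f.) -/
open Matrix Polynomial IsLocalRing

/-- Membership in the fractional ideal `P_F^n = ϖ^n · O_F` inside the fraction field. -/
def inPpow {O F : Type*} [CommRing O] [Field F] [Algebra O F]
    (ϖ : O) (n : ℤ) (x : F) : Prop :=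
  ∃ t : O, x = (algebraMap O F ϖ) ^ n * algebraMap O F t

/-- Upper triangular unipotent 4×4 matrices: the group `N(4,F)`. -/
def IsUnipUpper {F : Type*} [Field F] (u : Matrix (Fin 4) (Fin 4) F) : Prop :=
  (∀ i, u i i = 1) ∧ ∀ i j : Fin 4, j < i → u i j = 0

/-- The matrix `α(r,h,x)` of the paper. -/
noncomputable def alphaMat {O F : Type*} [CommRing O] [Field F] [Algebra O F]
    (ϖ : O) (r : ℤ) (h : Matrix (Fin 2) (Fin 2) O) (x : F) :
    Matrix (Fin 4) (Fin 4) F :=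
  !![algebraMap O F (h 0 0) * (algebraMap O F ϖ) ^ r, 0,
       algebraMap O F (h 0 1) * (algebraMap O F ϖ) ^ r, 0;
     0, algebraMap O F (h 0 0) * (algebraMap O F ϖ) ^ r, 0,
       algebraMap O F (h 0 1) * (algebraMap O F ϖ) ^ r;
     algebraMap O F (h 1 0), algebraMap O F (h 0 0) * x * (algebraMap O F ϖ) ^ r,
       algebraMap O F (h 1 1), algebraMap O F (h 0 1) * x * (algebraMap O F ϖ) ^ r;
     0, algebraMap O F (h 1 0), 0, algebraMap O F (h 1 1)]

/-- The matrix `β_f`. -/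
noncomputable def betaf (F : Type*) [Field F] {O : Type*} [CommRing O] [Algebra O F]
    (c d ϖ : O) : Matrix (Fin 4) (Fin 4) F :=
  !![0, 0, 0, algebraMap O F c * (algebraMap O F ϖ) ^ (-2 : ℤ);
     1, 0, 0, 0;
     0, 1, 0, algebraMap O F d * (algebraMap O F ϖ) ^ (-1 : ℤ);
     0, 0, 1, 0]

/-- The matrix `σ_f = ϖ · β_f²`. -/
noncomputable def sigmaf (F : Type*) [Field F] {O : Type*} [CommRing O] [Algebra O F]
    (c d ϖ : O) : Matrix (Fin 4) (Fin 4) F :=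
  algebraMap O F ϖ • (betaf F c d ϖ) ^ 2

/-- The exponent matrix of the hereditary order: entries of `𝔓_4` lie in `P_F^{e(i,j)}`. -/
def eMatf : Matrix (Fin 4) (Fin 4) ℤ :=
  !![1, 0, 0, -1; 1, 1, 0, 0; 2, 1, 1, 0; 2, 2, 1, 1]

/-- Membership in `U^1 = I_4 + 𝔓_4`. -/
def inU1f {O F : Type*} [CommRing O] [Field F] [Algebra O F]
    (ϖ : O) (z : Matrix (Fin 4) (Fin 4) F) : Prop :=
  ∃ p : Matrix (Fin 4) (Fin 4) F,
    (∀ i j : Fin 4, inPpow ϖ (eMatf i j) (p i j)) ∧ z = 1 + p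

/-- The matrix `x₀c·I₄ + x₁·σ_f`. -/
noncomputable def mMatf (F : Type*) [Field F] {O : Type*} [CommRing O] [Algebra O F]
    (c d ϖ x0 x1 : O) : Matrix (Fin 4) (Fin 4) F :=
  algebraMap O F (x0 * c) • (1 : Matrix (Fin 4) (Fin 4) F) +
    algebraMap O F x1 • sigmaf F c d ϖ

/-- Membership in `J_f`. -/
def inJf (F : Type*) [Field F] {O : Type*} [CommRing O] [Algebra O F]
    (c d ϖ : O) (y : Matrix (Fin 4) (Fin 4) F) : Prop :=
  ∃ (x0 x1 : O) (z : Matrix (Fin 4) (Fin 4) F),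
    inU1f ϖ z ∧
    (∃ w : Oˣ, algebraMap O F (w : O) = (mMatf F c d ϖ x0 x1).det) ∧
    y = mMatf F c d ϖ x0 x1 * z


namespace MiddleSupportAux

theorem mul_fin_four {α : Type*} [CommRing α]
    (a11 a12 a13 a14 a21 a22 a23 a24 a31 a32 a33 a34 a41 a42 a43 a44
     b11 b12 b13 b14 b21 b22 b23 b24 b31 b32 b33 b34 b41 b42 b43 b44 : α) :
    !![a11,a12,a13,a14; a21,a22,a23,a24; a31,a32,a33,a34; a41,a42,a43,a44] *
      !![b11,b12,b13,b14; b21,b22,b23,b24; b31,b32,b33,b34; b41,b42,b43,b44] =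
    !![a11*b11+a12*b21+a13*b31+a14*b41, a11*b12+a12*b22+a13*b32+a14*b42,
       a11*b13+a12*b23+a13*b33+a14*b43, a11*b14+a12*b24+a13*b34+a14*b44;
       a21*b11+a22*b21+a23*b31+a24*b41, a21*b12+a22*b22+a23*b32+a24*b42,
       a21*b13+a22*b23+a23*b33+a24*b43, a21*b14+a22*b24+a23*b34+a24*b44;
       a31*b11+a32*b21+a33*b31+a34*b41, a31*b12+a32*b22+a33*b32+a34*b42,
       a31*b13+a32*b23+a33*b33+a34*b43, a31*b14+a32*b24+a33*b34+a34*b44;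
       a41*b11+a42*b21+a43*b31+a44*b41, a41*b12+a42*b22+a43*b32+a44*b42,
       a41*b13+a42*b23+a43*b33+a44*b43, a41*b14+a42*b24+a43*b34+a44*b44] := by
  ext i j
  fin_cases i <;> fin_cases j <;> simp [Matrix.mul_apply, Fin.sum_univ_four]

theorem det_fin_four'' {α : Type*} [CommRing α]
    (a11 a12 a13 a14 a21 a22 a23 a24 a31 a32 a33 a34 a41 a42 a43 a44 : α) :
    (!![a11,a12,a13,a14; a21,a22,a23,a24; a31,a32,a33,a34; a41,a42,a43,a44]).det =
      a11 * (a22 * (a33 * a44 - a34 * a43) - a23 * (a32 * a44 - a34 * a42)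
        + a24 * (a32 * a43 - a33 * a42))
      - a12 * (a21 * (a33 * a44 - a34 * a43) - a23 * (a31 * a44 - a34 * a41)
        + a24 * (a31 * a43 - a33 * a41))
      + a13 * (a21 * (a32 * a44 - a34 * a42) - a22 * (a31 * a44 - a34 * a41)
        + a24 * (a31 * a42 - a32 * a41))
      - a14 * (a21 * (a32 * a43 - a33 * a42) - a22 * (a31 * a43 - a33 * a41)
        + a23 * (a31 * a42 - a32 * a41)) := by
  rw [Matrix.det_succ_row_zero]
  simp [Fin.sum_univ_succ, Matrix.det_fin_three,
    show ((2:Fin 4).succAbove 2 : Fin 4) = 3 by rfl, show ((1:Fin 4).succAbove 2 : Fin 4) = 3 by rfl,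
    show (Fin.castSucc 2 : Fin 4) = 2 by rfl, show (Fin.succ 2 : Fin 4) = 3 by rfl,
    show ((3:Fin 4).succAbove 2 : Fin 4) = 2 by rfl, show ((0:Fin 4).succAbove 2 : Fin 4) = 3 by rfl,
    show ((3:Fin 4).succAbove 1 : Fin 4) = 1 by rfl, show ((3:Fin 4).succAbove 0 : Fin 4) = 0 by rfl,
    show ((2:Fin 4).succAbove 1 : Fin 4) = 1 by rfl, show ((2:Fin 4).succAbove 0 : Fin 4) = 0 by rfl,
    show ((1:Fin 4).succAbove 1 : Fin 4) = 2 by rfl, show ((1:Fin 4).succAbove 0 : Fin 4) = 0 by rfl,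
    show ((0:Fin 4).succAbove 1 : Fin 4) = 2 by rfl, show ((0:Fin 4).succAbove 0 : Fin 4) = 1 by rfl]
  ring

theorem one_fin_four {α : Type*} [CommRing α] :
    (1 : Matrix (Fin 4) (Fin 4) α) = !![1,0,0,0; 0,1,0,0; 0,0,1,0; 0,0,0,1] := by
  ext i j; fin_cases i <;> fin_cases j <;> rfl

variable {O : Type*} [CommRing O] {F : Type*} [Field F] [Algebra O F]

/-- The even-type matrix `a + b·σ_f`. -/
noncomputable def Mev (c d ϖ a b : O) : Matrix (Fin 4) (Fin 4) F :=
  !![algebraMap O F a, 0, algebraMap O F (b*c) * (algebraMap O F ϖ)⁻¹, 0;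
     0, algebraMap O F a, 0, algebraMap O F (b*c) * (algebraMap O F ϖ)⁻¹;
     algebraMap O F b * algebraMap O F ϖ, 0, algebraMap O F (a+b*d), 0;
     0, algebraMap O F b * algebraMap O F ϖ, 0, algebraMap O F (a+b*d)]

/-- The odd-type matrix `(a + b·σ_f)·β_f`. -/
noncomputable def Mod' (c d ϖ a b : O) : Matrix (Fin 4) (Fin 4) F :=
  !![0, algebraMap O F (b*c) * (algebraMap O F ϖ)⁻¹, 0,
        algebraMap O F (c*(a+b*d)) * ((algebraMap O F ϖ)⁻¹ * (algebraMap O F ϖ)⁻¹);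
     algebraMap O F a, 0, algebraMap O F (b*c) * (algebraMap O F ϖ)⁻¹, 0;
     0, algebraMap O F (a+b*d), 0, algebraMap O F (b*c+a*d+b*d*d) * (algebraMap O F ϖ)⁻¹;
     algebraMap O F b * algebraMap O F ϖ, 0, algebraMap O F (a+b*d), 0]

theorem betaf_eq (c d ϖ : O) (hp : algebraMap O F ϖ ≠ 0) :
    betaf F c d ϖ =
      !![0, 0, 0, algebraMap O F c * ((algebraMap O F ϖ)⁻¹ * (algebraMap O F ϖ)⁻¹);
         1, 0, 0, 0;
         0, 1, 0, algebraMap O F d * (algebraMap O F ϖ)⁻¹;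
         0, 0, 1, 0] := by
  unfold betaf
  rw [show (-2 : ℤ) = -1 + -1 by norm_num, zpow_add₀ hp, _root_.zpow_neg_one]

set_option maxHeartbeats 1600000 in
theorem L1 (c d ϖ a b : O) (hp : algebraMap O F ϖ ≠ 0) :
    betaf F c d ϖ * Mev c d ϖ a b = Mod' c d ϖ a b := by
  rw [betaf_eq c d ϖ hp]
  unfold Mev Mod'
  rw [mul_fin_four]
  ext i j
  fin_cases i <;> fin_cases j <;>
      simp only [Matrix.of_apply, Fin.reduceFinMk, Fin.isValue, Matrix.cons_val, Matrix.cons_val', Matrix.cons_val_zero, Matrix.cons_val_one, Matrix.head_cons,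
        Matrix.head_fin_const, Matrix.empty_val', Matrix.cons_val_fin_one, _root_.map_add,
        _root_.map_mul] <;>
    (try field_simp) <;> (try ring)

set_option maxHeartbeats 1600000 in
theorem L2 (c d ϖ a b : O) (hp : algebraMap O F ϖ ≠ 0) :
    betaf F c d ϖ * Mod' c d ϖ a b =
      (algebraMap O F ϖ)⁻¹ • Mev c d ϖ (b*c) (a+b*d) := by
  rw [betaf_eq c d ϖ hp]
  unfold Mev Mod'
  rw [mul_fin_four]
  ext i j
  fin_cases i <;> fin_cases j <;>
      simp only [Matrix.of_apply, Fin.reduceFinMk, Fin.isValue, Matrix.cons_val, Matrix.smul_apply, Matrix.cons_val', Matrix.cons_val_zero, Matrix.cons_val_one,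
        Matrix.head_cons, Matrix.head_fin_const, Matrix.empty_val', Matrix.cons_val_fin_one,
        _root_.map_add, _root_.map_mul, smul_eq_mul] <;>
    (try field_simp) <;> (try ring)

set_option maxHeartbeats 1600000 in
theorem L3 (c d ϖ x0 x1 : O) (hp : algebraMap O F ϖ ≠ 0) :
    mMatf F c d ϖ x0 x1 = Mev c d ϖ (x0*c) x1 := by
  unfold mMatf sigmaf
  rw [pow_two, betaf_eq c d ϖ hp, mul_fin_four, one_fin_four]
  unfold Mev
  ext i j
  fin_cases i <;> fin_cases j <;>
      simp only [Matrix.of_apply, Fin.reduceFinMk, Fin.isValue, Matrix.cons_val, Matrix.add_apply, Matrix.smul_apply, Matrix.cons_val',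
        Matrix.cons_val_zero, Matrix.cons_val_one, Matrix.head_cons, Matrix.head_fin_const,
        Matrix.empty_val', Matrix.cons_val_fin_one, _root_.map_add, _root_.map_mul,
        smul_eq_mul] <;>
    (try field_simp) <;> (try ring)

theorem L4 (c d ϖ a b : O) (hp : algebraMap O F ϖ ≠ 0) :
    (Mev c d ϖ a b : Matrix (Fin 4) (Fin 4) F).det =
      (algebraMap O F (a*(a+b*d) - b*(b*c)))^2 := by
  unfold Mev
  rw [det_fin_four'']
  simp only [map_sub, _root_.map_add, _root_.map_mul]
  field_simp
  ring

theorem L5 (c d ϖ : O) (hp : algebraMap O F ϖ ≠ 0) :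
    (betaf F c d ϖ : Matrix (Fin 4) (Fin 4) F).det =
      -(algebraMap O F c * ((algebraMap O F ϖ)⁻¹ * (algebraMap O F ϖ)⁻¹)) := by
  rw [betaf_eq c d ϖ hp, det_fin_four'']
  ring


section RowLemmas

variable {O : Type*} [CommRing O] {F : Type*} [Field F] [Algebra O F]

theorem row3_unip (u W : Matrix (Fin 4) (Fin 4) F) (hu : IsUnipUpper u) (j : Fin 4) :
    (u * W) 3 j = W 3 j := by
  rw [Matrix.mul_apply, Fin.sum_univ_four, hu.2 3 0 (by decide), hu.2 3 1 (by decide),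
    hu.2 3 2 (by decide), hu.1 3]
  ring

theorem Mev_row1 (c d ϖ a b : O) (g : F) (q : Matrix (Fin 4) (Fin 4) F) :
    ((g • (Mev c d ϖ a b : Matrix (Fin 4) (Fin 4) F)) * (1 + q)) 3 1
      = g * (algebraMap O F b * algebraMap O F ϖ * (1 + q 1 1)
          + algebraMap O F (a+b*d) * q 3 1) := by
  rw [Matrix.mul_apply, Fin.sum_univ_four, one_fin_four]
  simp [Mev, Matrix.smul_apply, Matrix.add_apply, Matrix.vecHead, Matrix.vecTail, Function.comp]
  ring

theorem Mev_row3 (c d ϖ a b : O) (g : F) (q : Matrix (Fin 4) (Fin 4) F) :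
    ((g • (Mev c d ϖ a b : Matrix (Fin 4) (Fin 4) F)) * (1 + q)) 3 3
      = g * (algebraMap O F b * algebraMap O F ϖ * q 1 3
          + algebraMap O F (a+b*d) * (1 + q 3 3)) := by
  rw [Matrix.mul_apply, Fin.sum_univ_four, one_fin_four]
  simp [Mev, Matrix.smul_apply, Matrix.add_apply, Matrix.vecHead, Matrix.vecTail, Function.comp]
  ring

theorem Mod'_row0 (c d ϖ a b : O) (g : F) (q : Matrix (Fin 4) (Fin 4) F) :
    ((g • (Mod' c d ϖ a b : Matrix (Fin 4) (Fin 4) F)) * (1 + q)) 3 0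
      = g * (algebraMap O F b * algebraMap O F ϖ * (1 + q 0 0)
          + algebraMap O F (a+b*d) * q 2 0) := by
  rw [Matrix.mul_apply, Fin.sum_univ_four, one_fin_four]
  simp [Mod', Matrix.smul_apply, Matrix.add_apply, Matrix.vecHead, Matrix.vecTail, Function.comp]
  ring

theorem Mod'_row2 (c d ϖ a b : O) (g : F) (q : Matrix (Fin 4) (Fin 4) F) :
    ((g • (Mod' c d ϖ a b : Matrix (Fin 4) (Fin 4) F)) * (1 + q)) 3 2
      = g * (algebraMap O F b * algebraMap O F ϖ * q 0 2
          + algebraMap O F (a+b*d) * (1 + q 2 2)) := by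
  rw [Matrix.mul_apply, Fin.sum_univ_four, one_fin_four]
  simp [Mod', Matrix.smul_apply, Matrix.add_apply, Matrix.vecHead, Matrix.vecTail, Function.comp]
  ring

end RowLemmas

section DVRHelpers

variable {O : Type*} [CommRing O] [IsDomain O] [IsDiscreteValuationRing O]
  {F : Type*} [Field F] [Algebra O F] [IsFractionRing O F]

theorem pi_ne_zero {ϖ : O} (hϖ : Irreducible ϖ) : algebraMap O F ϖ ≠ 0 := by
  rw [map_ne_zero_iff _ (IsFractionRing.injective O F)]
  exact hϖ.ne_zero

theorem unit_or_dvd {ϖ : O} (hϖ : Irreducible ϖ) (x : O) : IsUnit x ∨ ϖ ∣ x := by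
  rcases em (IsUnit x) with hx | hx
  · exact Or.inl hx
  · right
    have : x ∈ IsLocalRing.maximalIdeal O := hx
    rw [hϖ.maximalIdeal_eq, Ideal.mem_span_singleton] at this
    exact this

theorem not_dvd_of_unit {ϖ : O} (hϖ : Irreducible ϖ) {x : O} (hx : IsUnit x) : ¬ ϖ ∣ x :=
  fun hdvd => hϖ.not_isUnit (isUnit_of_dvd_unit hdvd hx)

theorem map_eq_pow_mul {ϖ : O} {n : ℤ} (hn : 0 ≤ n) {v u : O}
    (heq : algebraMap O F v = (algebraMap O F ϖ)^n * algebraMap O F u) :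
    v = ϖ^(n.toNat) * u := by
  apply IsFractionRing.injective O F
  rw [heq, _root_.map_mul, map_pow, ← zpow_natCast, Int.toNat_of_nonneg hn]

theorem nonneg_exp {ϖ : O} (hϖ : Irreducible ϖ) {n : ℤ} {v u : O} (hu : ¬ ϖ ∣ u)
    (heq : algebraMap O F v = (algebraMap O F ϖ)^n * algebraMap O F u) : 0 ≤ n := by
  by_contra hneg
  push_neg at hneg
  have hp : algebraMap O F ϖ ≠ 0 := pi_ne_zero hϖ
  have h2 : algebraMap O F u = (algebraMap O F ϖ)^(-n) * algebraMap O F v := by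
    rw [heq, ← mul_assoc, ← zpow_add₀ hp]
    simp
  have h3 := map_eq_pow_mul (F := F) (by omega : (0:ℤ) ≤ -n) h2
  apply hu
  rw [h3]
  exact Dvd.dvd.mul_right (dvd_pow_self ϖ (by omega : (-n).toNat ≠ 0)) v

theorem core_even {ϖ : O} (hϖ : Irreducible ϖ) (e : ℤ) (A B g00 g01 g10 g11 : O)
    (hdet : IsUnit (g00*g11 - g01*g10))
    (hAB : ¬(ϖ ∣ A ∧ ϖ ∣ B))
    (h1 : algebraMap O F g10 = (algebraMap O F ϖ)^(1-e) * algebraMap O F B)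
    (h2 : algebraMap O F g11 = (algebraMap O F ϖ)^(-e) * algebraMap O F A) :
    e = 0 ∨ e = 1 := by
  have hp : algebraMap O F ϖ ≠ 0 := pi_ne_zero hϖ
  have contra : ϖ ∣ g10 → ϖ ∣ g11 → False := by
    intro d10 d11
    have : ϖ ∣ (g00*g11 - g01*g10) := dvd_sub (d11.mul_left g00) (d10.mul_left g01)
    exact (not_dvd_of_unit hϖ hdet) this
  rcases em (ϖ ∣ A) with hA | hA
  · -- A divisible, so B is not
    have hB : ¬ ϖ ∣ B := fun hB => hAB ⟨hA, hB⟩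
    have he1 : 0 ≤ 1 - e := nonneg_exp hϖ hB h1
    rcases em (e = 1) with he | he
    · exact Or.inr he
    · exfalso
      have hle : 0 ≤ 1 - e := he1
      have hlt : 1 ≤ 1 - e := by omega
      obtain ⟨A1, hA1⟩ := hA
      have h2' : algebraMap O F g11 = (algebraMap O F ϖ)^(1-e) * algebraMap O F A1 := by
        rw [h2, hA1, _root_.map_mul, show (1:ℤ)-e = -e+1 by ring, zpow_add₀ hp, zpow_one]
        ring
      have e10 := map_eq_pow_mul (F := F) hle h1
      have e11 := map_eq_pow_mul (F := F) hle h2'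
      refine contra ?_ ?_
      · rw [e10]; exact Dvd.dvd.mul_right (dvd_pow_self ϖ (by omega : (1-e).toNat ≠ 0)) B
      · rw [e11]; exact Dvd.dvd.mul_right (dvd_pow_self ϖ (by omega : (1-e).toNat ≠ 0)) A1
  · -- A not divisible
    have he1 : 0 ≤ -e := nonneg_exp hϖ hA h2
    rcases em (e = 0) with he | he
    · exact Or.inl he
    · exfalso
      have hle : 1 ≤ -e := by omega
      have e11 := map_eq_pow_mul (F := F) he1 h2
      have e10 := map_eq_pow_mul (F := F) (by omega : (0:ℤ) ≤ 1-e) h1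
      refine contra ?_ ?_
      · rw [e10]; exact Dvd.dvd.mul_right (dvd_pow_self ϖ (by omega : (1-e).toNat ≠ 0)) B
      · rw [e11]; exact Dvd.dvd.mul_right (dvd_pow_self ϖ (by omega : (-e).toNat ≠ 0)) A

end DVRHelpers

end MiddleSupportAux

open MiddleSupportAux in
theorem middle_support_lemma
    {O : Type*} [CommRing O] [IsDomain O] [IsDiscreteValuationRing O] [CharZero O]
    {F : Type*} [Field F] [Algebra O F] [IsFractionRing O F]
    (ϖ : O) (hϖ : Irreducible ϖ) (c d : O)
    (hf : Irreducible ((X ^ 2 - C d * X - C c : Polynomial O).map (residue O)))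
    (r : ℤ) (h : Matrix (Fin 2) (Fin 2) O) (hh : IsUnit h.det) (x : F)
    (k : ℤ) (u : Matrix (Fin 4) (Fin 4) F) (hu : IsUnipUpper u)
    (y : Matrix (Fin 4) (Fin 4) F) (hy : inJf F c d ϖ y)
    (heq : alphaMat ϖ r h x = u * (betaf F c d ϖ) ^ k * y) :
    k = 0 ∨ k = 2 := by
  classical
  obtain ⟨x0, x1, z, hzU, ⟨w, hw⟩, hyz⟩ := hy
  obtain ⟨q, hq, hz⟩ := hzU
  have inj := IsFractionRing.injective O F
  have hpne : algebraMap O F ϖ ≠ 0 := pi_ne_zero hϖ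
  -- c is a unit
  have hcu : IsUnit c := by
    rcases unit_or_dvd hϖ c with h1 | h1
    · exact h1
    · exfalso
      have hc0 : residue O c = 0 := by
        rw [IsLocalRing.residue_eq_zero_iff, hϖ.maximalIdeal_eq, Ideal.mem_span_singleton]
        exact h1
      have hfac : ((X ^ 2 - C d * X - C c : Polynomial O).map (residue O))
          = X * (X - C (residue O d)) := by
        simp [Polynomial.map_sub, Polynomial.map_pow, Polynomial.map_mul, hc0]
        ring
      rcases hf.isUnit_or_isUnit hfac with h2 | h2
      · exact Polynomial.not_isUnit_X h2
      · exact Polynomial.not_isUnit_X_sub_C _ h2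
  have hc0F : algebraMap O F c ≠ 0 := by
    rw [map_ne_zero_iff _ inj]; exact hcu.ne_zero
  have hβdet : IsUnit (betaf F c d ϖ).det := by
    rw [L5 c d ϖ hpne]
    exact isUnit_iff_ne_zero.mpr
      (neg_ne_zero.mpr (mul_ne_zero hc0F (mul_ne_zero (inv_ne_zero hpne) (inv_ne_zero hpne))))
  -- the norm of x0 c + x1 σ is a unit
  have hnrm0 : IsUnit ((x0*c)*((x0*c)+x1*d) - x1*(x1*c)) := by
    have hval : (w : O) = ((x0*c)*((x0*c)+x1*d) - x1*(x1*c))^2 := by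
      apply inj
      rw [map_pow, hw, L3 c d ϖ x0 x1 hpne, L4 c d ϖ (x0*c) x1 hpne]
    exact isUnit_of_dvd_unit ⟨_, by rw [hval, sq]⟩ w.isUnit
  -- generic norm identity
  have hgen : ∀ A B : O,
      (B*c)*((B*c)+(A+B*d)*d) - (A+B*d)*((A+B*d)*c) = -(c * (A*(A+B*d) - B*(B*c))) :=
    fun A B => by ring
  -- the key induction on k
  have key : ∀ k : ℤ, ∃ (e : ℤ) (a b : O), IsUnit (a*(a+b*d) - b*(b*c)) ∧
      ((k = 2*e ∧ (betaf F c d ϖ)^k * mMatf F c d ϖ x0 x1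
          = ((algebraMap O F ϖ)^(-e) : F) • Mev c d ϖ a b) ∨
       (k = 2*e+1 ∧ (betaf F c d ϖ)^k * mMatf F c d ϖ x0 x1
          = ((algebraMap O F ϖ)^(-e) : F) • Mod' c d ϖ a b)) := by
    intro k
    induction k using Int.induction_on with
    | zero =>
      refine ⟨0, x0*c, x1, hnrm0, Or.inl ⟨by ring, ?_⟩⟩
      rw [zpow_zero, Matrix.one_mul, neg_zero, zpow_zero, one_smul]
      exact L3 c d ϖ x0 x1 hpne
    | succ i ih =>
      obtain ⟨e, a, b, hnab, hcase⟩ := ih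
      have hsplit : (betaf F c d ϖ)^((i:ℤ)+1) * mMatf F c d ϖ x0 x1
          = betaf F c d ϖ * ((betaf F c d ϖ)^(i:ℤ) * mMatf F c d ϖ x0 x1) := by
        rw [← Matrix.mul_assoc, add_comm, Matrix.zpow_add hβdet, zpow_one]
      rcases hcase with ⟨hk, hmat⟩ | ⟨hk, hmat⟩
      · refine ⟨e, a, b, hnab, Or.inr ⟨by omega, ?_⟩⟩
        rw [hsplit, hmat, Matrix.mul_smul, L1 c d ϖ a b hpne]
      · refine ⟨e+1, b*c, a+b*d, ?_, Or.inl ⟨by omega, ?_⟩⟩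
        · rw [hgen a b]; exact (hcu.mul hnab).neg
        · rw [hsplit, hmat, Matrix.mul_smul, L2 c d ϖ a b hpne, smul_smul]
          congr 1
          rw [← _root_.zpow_neg_one (algebraMap O F ϖ), ← zpow_add₀ hpne]
          congr 1
          ring
    | pred i ih =>
      obtain ⟨e, a, b, hnab, hcase⟩ := ih
      have hsplit : (betaf F c d ϖ)^((-i:ℤ)-1) * mMatf F c d ϖ x0 x1
          = (betaf F c d ϖ)⁻¹ * ((betaf F c d ϖ)^(-i:ℤ) * mMatf F c d ϖ x0 x1) := by
        rw [← Matrix.mul_assoc, sub_eq_add_neg, add_comm, Matrix.zpow_add hβdet,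
          Matrix.zpow_neg_one]
      rcases hcase with ⟨hk, hmat⟩ | ⟨hk, hmat⟩
      · -- even -> odd with exponent e-1
        obtain ⟨ci, hci⟩ := isUnit_iff_exists_inv.mp hcu
        refine ⟨e-1, b - a * ci * d, a * ci, ?_, Or.inr ⟨by omega, ?_⟩⟩
        · have h1 : (a * ci) * c = a := by linear_combination a * hci
          have h2 : (b - a * ci * d) + (a * ci) * d = b := by ring
          have hrw : a*(a+b*d) - b*(b*c)
              = -(c * ((b - a*ci*d)*((b - a*ci*d)+(a*ci)*d) - (a*ci)*((a*ci)*c))) := by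
            conv_lhs => rw [← h1, ← h2]
            exact hgen (b - a*ci*d) (a*ci)
          rw [hrw] at hnab
          have := hnab.neg
          rw [neg_neg] at this
          exact isUnit_of_mul_isUnit_right this
        · have h1 : (a * ci) * c = a := by linear_combination a * hci
          have h2 : (b - a * ci * d) + (a * ci) * d = b := by ring
          have hMev : (Mev c d ϖ a b : Matrix (Fin 4) (Fin 4) F)
              = algebraMap O F ϖ • (betaf F c d ϖ * Mod' c d ϖ (b - a*ci*d) (a*ci)) := by
            rw [L2 c d ϖ (b - a*ci*d) (a*ci) hpne, h1, h2, smul_smul,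
              mul_inv_cancel₀ hpne, one_smul]
          rw [hsplit, hmat, Matrix.mul_smul, hMev, Matrix.mul_smul, ← Matrix.mul_assoc,
            Matrix.nonsing_inv_mul _ hβdet, Matrix.one_mul, smul_smul]
          congr 1
          rw [show -(e-1) = -e + 1 by ring, zpow_add₀ hpne, zpow_one]
      · -- odd -> even with exponent e
        refine ⟨e, a, b, hnab, Or.inl ⟨by omega, ?_⟩⟩
        rw [hsplit, hmat, Matrix.mul_smul, ← L1 c d ϖ a b hpne, ← Matrix.mul_assoc,
          Matrix.nonsing_inv_mul _ hβdet, Matrix.one_mul]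
  -- extract information from row 3
  obtain ⟨e, a, b, hnab, hcase⟩ := key k
  have notboth : ¬(ϖ ∣ (a + b*d) ∧ ϖ ∣ b) := by
    rintro ⟨hd1, hd2⟩
    have hda : ϖ ∣ a := by
      have hrw : a = (a + b*d) - b*d := by ring
      rw [hrw]; exact dvd_sub hd1 (hd2.mul_right d)
    exact not_dvd_of_unit hϖ hnab (dvd_sub (hda.mul_right _) (hd2.mul_right _))
  have hαeq := heq
  rw [hyz, hz, Matrix.mul_assoc u,
    ← Matrix.mul_assoc ((betaf F c d ϖ)^k) (mMatf F c d ϖ x0 x1) (1+q)] at hαeq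
  have hrow : ∀ j : Fin 4, alphaMat ϖ r h x 3 j
      = ((betaf F c d ϖ)^k * mMatf F c d ϖ x0 x1 * (1+q)) 3 j := by
    intro j
    rw [hαeq]
    exact row3_unip _ _ hu j
  have h2pow : (algebraMap O F ϖ : F)^(2:ℤ) = algebraMap O F ϖ * algebraMap O F ϖ := by
    rw [show (2:ℤ) = 1 + 1 by norm_num, zpow_add₀ hpne, zpow_one]
  rcases hcase with ⟨hk, hmat⟩ | ⟨hk, hmat⟩
  · -- even case : k = 2e and e ∈ {0,1}
    obtain ⟨t11, ht11⟩ := hq 1 1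
    obtain ⟨t31, ht31⟩ := hq 3 1
    obtain ⟨t13, ht13⟩ := hq 1 3
    obtain ⟨t33, ht33⟩ := hq 3 3
    rw [show eMatf 1 1 = 1 from rfl, zpow_one] at ht11
    rw [show eMatf 3 1 = 2 from rfl, h2pow] at ht31
    rw [show eMatf 1 3 = 0 from rfl, zpow_zero, one_mul] at ht13
    rw [show eMatf 3 3 = 1 from rfl, zpow_one] at ht33
    have hE1 : algebraMap O F (h 1 0)
        = (algebraMap O F ϖ)^(1-e) * algebraMap O F (b + ϖ*(b*t11 + (a+b*d)*t31)) := by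
      have h0 := hrow 1
      rw [hmat, Mev_row1, show alphaMat ϖ r h x 3 1 = algebraMap O F (h 1 0) from rfl] at h0
      rw [h0, ht11, ht31, show (1:ℤ)-e = -e+1 by ring, zpow_add₀ hpne, zpow_one]
      simp only [_root_.map_add, _root_.map_mul]
      ring
    have hE3 : algebraMap O F (h 1 1)
        = (algebraMap O F ϖ)^(-e) * algebraMap O F ((a+b*d) + ϖ*(b*t13 + (a+b*d)*t33)) := by
      have h0 := hrow 3
      rw [hmat, Mev_row3, show alphaMat ϖ r h x 3 3 = algebraMap O F (h 1 1) from rfl] at h0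
      rw [h0, ht13, ht33]
      simp only [_root_.map_add, _root_.map_mul]
      ring
    have hAB : ¬(ϖ ∣ ((a+b*d) + ϖ*(b*t13 + (a+b*d)*t33)) ∧ ϖ ∣ (b + ϖ*(b*t11 + (a+b*d)*t31))) := by
      rintro ⟨hd1, hd2⟩
      refine notboth ⟨?_, ?_⟩
      · have hrw : (a+b*d) = ((a+b*d) + ϖ*(b*t13 + (a+b*d)*t33)) - ϖ*(b*t13 + (a+b*d)*t33) := by
          ring
        rw [hrw]; exact dvd_sub hd1 (Dvd.intro _ rfl)
      · have hrw : b = (b + ϖ*(b*t11 + (a+b*d)*t31)) - ϖ*(b*t11 + (a+b*d)*t31) := by ring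
        rw [hrw]; exact dvd_sub hd2 (Dvd.intro _ rfl)
    have hdet2 : IsUnit (h 0 0 * h 1 1 - h 0 1 * h 1 0) := by
      rwa [Matrix.det_fin_two] at hh
    rcases core_even (F := F) hϖ e _ _ (h 0 0) (h 0 1) (h 1 0) (h 1 1) hdet2 hAB hE1 hE3 with
      he | he
    · left; omega
    · right; omega
  · -- odd case : contradiction
    exfalso
    obtain ⟨t00, ht00⟩ := hq 0 0
    obtain ⟨t20, ht20⟩ := hq 2 0
    obtain ⟨t02, ht02⟩ := hq 0 2
    obtain ⟨t22, ht22⟩ := hq 2 2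
    rw [show eMatf 0 0 = 1 from rfl, zpow_one] at ht00
    rw [show eMatf 2 0 = 2 from rfl, h2pow] at ht20
    rw [show eMatf 0 2 = 0 from rfl, zpow_zero, one_mul] at ht02
    rw [show eMatf 2 2 = 1 from rfl, zpow_one] at ht22
    have hgne : ((algebraMap O F ϖ : F)^(-e) : F) ≠ 0 := zpow_ne_zero _ hpne
    have hE0 : (0 : F)
        = (algebraMap O F ϖ)^(-e) * (algebraMap O F ϖ
            * algebraMap O F (b + ϖ*(b*t00 + (a+b*d)*t20))) := by
      have h0 := hrow 0
      rw [hmat, Mod'_row0, show alphaMat ϖ r h x 3 0 = (0:F) from rfl] at h0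
      rw [h0, ht00, ht20]
      simp only [_root_.map_add, _root_.map_mul]
      ring
    have hE2 : (0 : F)
        = (algebraMap O F ϖ)^(-e)
            * algebraMap O F ((a+b*d) + ϖ*(b*t02 + (a+b*d)*t22)) := by
      have h0 := hrow 2
      rw [hmat, Mod'_row2, show alphaMat ϖ r h x 3 2 = (0:F) from rfl] at h0
      rw [h0, ht02, ht22]
      simp only [_root_.map_add, _root_.map_mul]
      ring
    have hb : ϖ ∣ b := by
      have hz1 : algebraMap O F (b + ϖ*(b*t00 + (a+b*d)*t20)) = 0 := by
        have := hE0.symm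
        rcases mul_eq_zero.mp this with h' | h'
        · exact absurd h' hgne
        · rcases mul_eq_zero.mp h' with h'' | h''
          · exact absurd h'' hpne
          · exact h''
      have hz2 : b + ϖ*(b*t00 + (a+b*d)*t20) = 0 := by
        apply inj; rw [hz1, map_zero]
      exact ⟨-(b*t00 + (a+b*d)*t20), by linear_combination hz2⟩
    have habd : ϖ ∣ (a + b*d) := by
      have hz1 : algebraMap O F ((a+b*d) + ϖ*(b*t02 + (a+b*d)*t22)) = 0 := by
        have := hE2.symm
        rcases mul_eq_zero.mp this with h' | h'
        · exact absurd h' hgne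
        · exact h'
      have hz2 : (a+b*d) + ϖ*(b*t02 + (a+b*d)*t22) = 0 := by
        apply inj; rw [hz1, map_zero]
      exact ⟨-(b*t02 + (a+b*d)*t22), by linear_combination hz2⟩
    exact notboth ⟨habd, hb⟩
end

section
/- Suppose that for some k ∈ ℤ there exist u ∈ N(4,F) and y ∈ J_{f_M} such that α(r,h,x) = u · (ϖ^k I_4) · y. Then −2 ≤ k ≤ 0. (Equivalently: if k does not lie in {−2,−1,0}, then α(r,h,x) does not lie in the double coset N(4,F)·ϖ^k·J_{f_M}.) -/
open Matrix Polynomial IsLocalRing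

/-- The matrix `β_{f_M}`. -/
noncomputable def betaM (F : Type*) [Field F] {O : Type*} [CommRing O] [Algebra O F]
    (a b ϖ : O) : Matrix (Fin 4) (Fin 4) F :=
  !![0, 0, 0, algebraMap O F a * (algebraMap O F ϖ) ^ (-4 : ℤ);
     1, 0, 0, 0;
     0, 1, 0, algebraMap O F b * (algebraMap O F ϖ) ^ (-2 : ℤ);
     0, 0, 1, 0]

/-- The matrix `σ = ϖ · β_{f_M}`. -/
noncomputable def sigmaM (F : Type*) [Field F] {O : Type*} [CommRing O] [Algebra O F]
    (a b ϖ : O) : Matrix (Fin 4) (Fin 4) F :=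
  algebraMap O F ϖ • betaM F a b ϖ

/-- Membership in `U^1_M = I_4 + ϖ·𝔄_M`, where the `(i,j)` entry of an element of `𝔄_M`
lies in `P_F^{i-j}`. -/
def inU1M {O F : Type*} [CommRing O] [Field F] [Algebra O F]
    (ϖ : O) (z : Matrix (Fin 4) (Fin 4) F) : Prop :=
  ∃ p : Matrix (Fin 4) (Fin 4) F,
    (∀ i j : Fin 4, inPpow ϖ (((i : ℕ) : ℤ) - ((j : ℕ) : ℤ)) (p i j)) ∧
    z = 1 + algebraMap O F ϖ • p

/-- The matrix `x₀·I₄ + x₁σ + x₂σ² + x₃σ³`. -/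
noncomputable def mMatM (F : Type*) [Field F] {O : Type*} [CommRing O] [Algebra O F]
    (a b ϖ x0 x1 x2 x3 : O) : Matrix (Fin 4) (Fin 4) F :=
  algebraMap O F x0 • (1 : Matrix (Fin 4) (Fin 4) F) +
    algebraMap O F x1 • sigmaM F a b ϖ +
    algebraMap O F x2 • (sigmaM F a b ϖ) ^ 2 +
    algebraMap O F x3 • (sigmaM F a b ϖ) ^ 3

/-- Membership in `J_{f_M}`. -/
def inJM (F : Type*) [Field F] {O : Type*} [CommRing O] [Algebra O F]
    (a b ϖ : O) (y : Matrix (Fin 4) (Fin 4) F) : Prop :=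
  ∃ (x0 x1 x2 x3 : O) (z : Matrix (Fin 4) (Fin 4) F),
    inU1M ϖ z ∧
    (∃ w : Oˣ, algebraMap O F (w : O) = (mMatM F a b ϖ x0 x1 x2 x3).det) ∧
    y = mMatM F a b ϖ x0 x1 x2 x3 * z

section
variable {O : Type*} [CommRing O] (F : Type*) [Field F] [Algebra O F]

noncomputable def Dm (ϖ : O) : Matrix (Fin 4) (Fin 4) F :=
  Matrix.diagonal fun i => (algebraMap O F ϖ) ^ (i : ℕ)

noncomputable def Em (ϖ : O) : Matrix (Fin 4) (Fin 4) F :=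
  Matrix.diagonal fun i => (algebraMap O F ϖ) ^ (-((i : ℕ) : ℤ))

noncomputable def Cg (ϖ : O) (N : Matrix (Fin 4) (Fin 4) O) : Matrix (Fin 4) (Fin 4) F :=
  Dm F ϖ * N.map (algebraMap O F) * Em F ϖ

variable {ϖ : O}

lemma DE_eq (hπ : (algebraMap O F ϖ) ≠ 0) : Dm F ϖ * Em F ϖ = 1 := by
  rw [Dm, Em, diagonal_mul_diagonal]
  have : ∀ i : Fin 4, (algebraMap O F ϖ) ^ (i : ℕ) * (algebraMap O F ϖ) ^ (-((i : ℕ) : ℤ)) = 1 := by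
    intro i
    rw [← zpow_natCast (algebraMap O F ϖ), ← zpow_add₀ hπ]
    simp
  simp only [this]
  exact Matrix.diagonal_one

lemma ED_eq (hπ : (algebraMap O F ϖ) ≠ 0) : Em F ϖ * Dm F ϖ = 1 := by
  rw [Em, Dm, diagonal_mul_diagonal]
  have : ∀ i : Fin 4, (algebraMap O F ϖ) ^ (-((i : ℕ) : ℤ)) * (algebraMap O F ϖ) ^ (i : ℕ) = 1 := by
    intro i
    rw [← zpow_natCast (algebraMap O F ϖ), ← zpow_add₀ hπ]
    simp
  simp only [this]
  exact Matrix.diagonal_one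

lemma Cg_apply (N : Matrix (Fin 4) (Fin 4) O) (i j : Fin 4) :
    Cg F ϖ N i j = (algebraMap O F ϖ) ^ (i : ℕ) * algebraMap O F (N i j) *
      (algebraMap O F ϖ) ^ (-((j : ℕ) : ℤ)) := by
  rw [Cg, Dm, Em, Matrix.mul_diagonal, Matrix.diagonal_mul, Matrix.map_apply]

lemma Cg_mul (hπ : (algebraMap O F ϖ) ≠ 0) (N N' : Matrix (Fin 4) (Fin 4) O) :
    Cg F ϖ N * Cg F ϖ N' = Cg F ϖ (N * N') := by
  rw [Cg, Cg, Cg, Matrix.map_mul]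
  calc Dm F ϖ * N.map (algebraMap O F) * Em F ϖ * (Dm F ϖ * N'.map (algebraMap O F) * Em F ϖ)
      = Dm F ϖ * N.map (algebraMap O F) * ((Em F ϖ * Dm F ϖ) * (N'.map (algebraMap O F) * Em F ϖ)) := by
        simp only [Matrix.mul_assoc]
    _ = _ := by rw [ED_eq F hπ, Matrix.one_mul]; simp only [Matrix.mul_assoc]

lemma Cg_one (hπ : (algebraMap O F ϖ) ≠ 0) : Cg F ϖ 1 = 1 := by
  rw [Cg, Matrix.map_one _ (map_zero _) (map_one _), Matrix.mul_one, DE_eq F hπ]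

lemma Cg_add (N N' : Matrix (Fin 4) (Fin 4) O) :
    Cg F ϖ (N + N') = Cg F ϖ N + Cg F ϖ N' := by
  have hmadd : (N + N').map (algebraMap O F) = N.map (algebraMap O F) + N'.map (algebraMap O F) := by
    ext i j; simp [Matrix.map_apply]
  simp only [Cg, hmadd, Matrix.mul_add, Matrix.add_mul]

lemma Cg_smul (c : O) (N : Matrix (Fin 4) (Fin 4) O) :
    Cg F ϖ (c • N) = algebraMap O F c • Cg F ϖ N := by
  rw [Cg, Cg]
  have : (c • N).map (algebraMap O F) = algebraMap O F c • N.map (algebraMap O F) := by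
    ext i j
    simp [Matrix.map_apply]
  rw [this, Matrix.mul_smul, Matrix.smul_mul]

lemma det_Cg (hπ : (algebraMap O F ϖ) ≠ 0) (N : Matrix (Fin 4) (Fin 4) O) :
    (Cg F ϖ N).det = algebraMap O F N.det := by
  rw [Cg, Matrix.det_mul, Matrix.det_mul, RingHom.map_det]
  have h1 : (Dm F ϖ).det * (Em F ϖ).det = 1 := by
    rw [← Matrix.det_mul, DE_eq F hπ, Matrix.det_one]
  calc (Dm F ϖ).det * ((N.map (algebraMap O F)).det) * (Em F ϖ).det
      = ((Dm F ϖ).det * (Em F ϖ).det) * (N.map (algebraMap O F)).det := by ring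
    _ = _ := by rw [h1, one_mul, RingHom.mapMatrix_apply]

lemma adj_Cg (hπ : (algebraMap O F ϖ) ≠ 0) (N : Matrix (Fin 4) (Fin 4) O) :
    (Cg F ϖ N).adjugate = Cg F ϖ N.adjugate := by
  have hadjE : (Em F ϖ).adjugate = (Em F ϖ).det • Dm F ϖ := by
    have h := Matrix.mul_adjugate (Em F ϖ)
    have := congrArg (fun M => Dm F ϖ * M) h
    rw [← Matrix.mul_assoc, DE_eq F hπ, Matrix.one_mul, Matrix.mul_smul, Matrix.mul_one] at this
    exact this
  have hadjD : (Dm F ϖ).adjugate = (Dm F ϖ).det • Em F ϖ := by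
    have h := Matrix.mul_adjugate (Dm F ϖ)
    have := congrArg (fun M => Em F ϖ * M) h
    rw [← Matrix.mul_assoc, ED_eq F hπ, Matrix.one_mul, Matrix.mul_smul, Matrix.mul_one] at this
    exact this
  have h1 : (Em F ϖ).det * (Dm F ϖ).det = 1 := by
    rw [← Matrix.det_mul, ED_eq F hπ, Matrix.det_one]
  rw [Cg, Matrix.adjugate_mul_distrib, Matrix.adjugate_mul_distrib, hadjE, hadjD,
    ← RingHom.mapMatrix_apply, ← RingHom.map_adjugate, RingHom.mapMatrix_apply]
  rw [Matrix.smul_mul, Matrix.mul_smul, Matrix.mul_smul, smul_smul, h1, one_smul, Cg,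
    Matrix.mul_assoc]


lemma sigma_rep (hπ : (algebraMap O F ϖ) ≠ 0) (a b : O) :
    sigmaM F a b ϖ = Cg F ϖ !![0,0,0,a; 1,0,0,0; 0,1,0,b; 0,0,1,0] := by
  ext i j
  rw [Cg_apply]
  fin_cases i <;> fin_cases j <;>
    simp [sigmaM, betaM, Matrix.vecHead, Matrix.vecTail]
  all_goals (try simp only [_root_.zpow_neg, _root_.zpow_ofNat])
  all_goals (try field_simp)
  all_goals ring

end
theorem biquadratic_support_lemma
    {O : Type*} [CommRing O] [IsDomain O] [IsDiscreteValuationRing O] [CharZero O]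
    {F : Type*} [Field F] [Algebra O F] [IsFractionRing O F]
    (ϖ : O) (hϖ : Irreducible ϖ) (a b : O)
    (hf : Irreducible ((X ^ 4 - C b * X ^ 2 - C a : Polynomial O).map (residue O)))
    (r : ℤ) (h : Matrix (Fin 2) (Fin 2) O) (hh : IsUnit h.det) (x : F)
    (k : ℤ) (u : Matrix (Fin 4) (Fin 4) F) (hu : IsUnipUpper u)
    (y : Matrix (Fin 4) (Fin 4) F) (hy : inJM F a b ϖ y)
    (heq : alphaMat ϖ r h x =
      u * ((algebraMap O F ϖ) ^ k • (1 : Matrix (Fin 4) (Fin 4) F)) * y) :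
    -2 ≤ k ∧ k ≤ 0 := by
  classical
  have hinj : Function.Injective (algebraMap O F) := IsFractionRing.injective O F
  have hϖ0 : ϖ ≠ 0 := hϖ.ne_zero
  have hπ : (algebraMap O F) ϖ ≠ 0 := fun h0 => hϖ0 (hinj (by rw [h0, _root_.map_zero]))
  obtain ⟨x0, x1, x2, x3, z, ⟨p, hp, hzdef⟩, ⟨w, hw⟩, hym⟩ := hy
  choose T hT using hp
  set P : Matrix (Fin 4) (Fin 4) O := Matrix.of T with hPdef
  have hprep : p = Cg F ϖ P := by
    ext i j
    rw [Cg_apply, hT i j, sub_eq_add_neg, zpow_add₀ hπ, zpow_natCast]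
    rw [show P i j = T i j from rfl]
    ring
  have hzrep : z = Cg F ϖ (1 + ϖ • P) := by
    rw [hzdef, Cg_add, Cg_one F hπ, Cg_smul, hprep]
  set S : Matrix (Fin 4) (Fin 4) O := !![0,0,0,a; 1,0,0,0; 0,1,0,b; 0,0,1,0] with hSdef
  set M0 : Matrix (Fin 4) (Fin 4) O := x0 • 1 + x1 • S + x2 • (S * S) + x3 • (S * S * S)
    with hM0def
  have hσ : sigmaM F a b ϖ = Cg F ϖ S := sigma_rep F hπ a b
  have h2 : (Cg F ϖ S) ^ 2 = Cg F ϖ (S * S) := by rw [pow_two, Cg_mul F hπ]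
  have h3 : (Cg F ϖ S) ^ 3 = Cg F ϖ (S * S * S) := by
    rw [pow_succ, pow_two, Cg_mul F hπ, Cg_mul F hπ]
  have hmrep : mMatM F a b ϖ x0 x1 x2 x3 = Cg F ϖ M0 := by
    rw [mMatM, hσ, h2, h3, hM0def, Cg_add, Cg_add, Cg_add, Cg_smul, Cg_smul, Cg_smul,
      Cg_smul, Cg_one F hπ]
  set Y : Matrix (Fin 4) (Fin 4) O := M0 * (1 + ϖ • P) with hYdef
  have hyrep : y = Cg F ϖ Y := by rw [hym, hmrep, hzrep, Cg_mul F hπ]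
  -- determinant facts
  have hdetM0 : M0.det = (w : O) := by
    have : algebraMap O F M0.det = algebraMap O F (w : O) := by
      rw [← det_Cg F hπ, ← hmrep, ← hw]
    exact hinj this
  have hres : IsLocalRing.residue O ((1 + ϖ • P) : Matrix (Fin 4) (Fin 4) O).det = 1 := by
    rw [RingHom.map_det]
    have hϖres : IsLocalRing.residue O ϖ = 0 := by
      rw [IsLocalRing.residue_eq_zero_iff]
      exact (IsLocalRing.mem_maximalIdeal ϖ).mpr (mem_nonunits_iff.mpr hϖ.not_isUnit)
    have hmap : (RingHom.mapMatrix (IsLocalRing.residue O))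
        ((1 + ϖ • P) : Matrix (Fin 4) (Fin 4) O) = 1 := by
      ext i j
      by_cases hij : i = j <;>
        simp [RingHom.mapMatrix_apply, Matrix.map_apply, Matrix.add_apply, Matrix.smul_apply,
          Matrix.one_apply, hij, hϖres]
    rw [hmap, Matrix.det_one]
  have hdetZ : IsUnit ((1 + ϖ • P) : Matrix (Fin 4) (Fin 4) O).det := by
    rw [← IsLocalRing.notMem_maximalIdeal]
    intro hm
    rw [← IsLocalRing.residue_eq_zero_iff, hres] at hm
    exact one_ne_zero hm
  have hdetY : IsUnit Y.det := by
    rw [hYdef, Matrix.det_mul]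
    exact IsUnit.mul ⟨w, hdetM0.symm⟩ hdetZ
  -- unipotent facts
  obtain ⟨hud, huo⟩ := hu
  have hu30 : u 3 0 = 0 := huo 3 0 (by decide)
  have hu31 : u 3 1 = 0 := huo 3 1 (by decide)
  have hu32 : u 3 2 = 0 := huo 3 2 (by decide)
  have hu33 : u 3 3 = 1 := hud 3
  have heq' : alphaMat ϖ r h x = (algebraMap O F ϖ) ^ k • (u * y) := by
    rw [heq, Matrix.mul_smul, Matrix.mul_one, Matrix.smul_mul]
  have hrow3 : ∀ c, alphaMat ϖ r h x 3 c = (algebraMap O F ϖ) ^ k * y 3 c := by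
    intro c
    rw [heq', Matrix.smul_apply, Matrix.mul_apply, Fin.sum_univ_four, hu30, hu31, hu32, hu33,
      smul_eq_mul]
    ring
  have ha30 : alphaMat ϖ r h x 3 0 = 0 := by simp [alphaMat]
  have ha31 : alphaMat ϖ r h x 3 1 = algebraMap O F (h 1 0) := by simp [alphaMat]
  have ha32 : alphaMat ϖ r h x 3 2 = 0 := by simp [alphaMat]
  have ha33 : alphaMat ϖ r h x 3 3 = algebraMap O F (h 1 1) := by simp [alphaMat]
  -- entries of y
  have hy31 : y 3 1 = (algebraMap O F ϖ) ^ (2 : ℕ) * algebraMap O F (Y 3 1) := by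
    rw [hyrep, Cg_apply]
    norm_num [show ((3 : Fin 4) : ℕ) = 3 from rfl, show ((1 : Fin 4) : ℕ) = 1 from rfl]
    field_simp
  have hy33 : y 3 3 = algebraMap O F (Y 3 3) := by
    rw [hyrep, Cg_apply]
    norm_num [show ((3 : Fin 4) : ℕ) = 3 from rfl]
    rw [mul_comm ((algebraMap O F ϖ) ^ 3) (algebraMap O F (Y 3 3))]
    exact mul_inv_cancel_right₀ (pow_ne_zero 3 hπ) _
  -- upper bound
  have hukey : algebraMap O F h.det =
      (algebraMap O F ϖ) ^ k * algebraMap O F (h 0 0 * Y 3 3 - ϖ ^ 2 * (h 0 1 * Y 3 1)) := by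
    have e1 : algebraMap O F (h 1 1) = (algebraMap O F ϖ) ^ k * algebraMap O F (Y 3 3) := by
      rw [← ha33, hrow3 3, hy33]
    have e0 : algebraMap O F (h 1 0) =
        (algebraMap O F ϖ) ^ k * ((algebraMap O F ϖ) ^ (2 : ℕ) * algebraMap O F (Y 3 1)) := by
      rw [← ha31, hrow3 1, hy31]
    rw [Matrix.det_fin_two, _root_.map_sub, _root_.map_mul, _root_.map_mul, _root_.map_sub, _root_.map_mul, _root_.map_mul, _root_.map_mul,
      _root_.map_pow, e1, e0]
    ring
  have hk0 : k ≤ 0 := by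
    by_contra hk
    push_neg at hk
    have hnat : (algebraMap O F ϖ) ^ k = algebraMap O F (ϖ ^ k.toNat) := by
      rw [_root_.map_pow, ← zpow_natCast (algebraMap O F ϖ), Int.toNat_of_nonneg (le_of_lt hk)]
    rw [hnat, ← _root_.map_mul] at hukey
    have hdet := hinj hukey
    have hdvd : ϖ ∣ h.det := by
      rw [hdet]
      exact Dvd.dvd.mul_right (dvd_pow_self ϖ (by omega : k.toNat ≠ 0)) _
    exact hϖ.not_isUnit (isUnit_of_dvd_unit hdvd hh)
  -- lower bound
  have hadjy : y.adjugate = Cg F ϖ Y.adjugate := by rw [hyrep, adj_Cg F hπ]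
  have hdety : y.det = algebraMap O F Y.det := by rw [hyrep, det_Cg F hπ]
  have hadj13 : y.adjugate 1 3 =
      (algebraMap O F ϖ) * algebraMap O F (Y.adjugate 1 3) * ((algebraMap O F ϖ) ^ (3:ℕ))⁻¹ := by
    rw [hadjy, Cg_apply]
    norm_num [show ((3 : Fin 4) : ℕ) = 3 from rfl, show ((1 : Fin 4) : ℕ) = 1 from rfl]
    try field_simp
    try ring
    try (left; first | rfl | exact _root_.zpow_ofNat _ 3 | exact (_root_.zpow_ofNat _ 3).symm | norm_cast)
  have hadj33 : y.adjugate 3 3 = algebraMap O F (Y.adjugate 3 3) := by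
    rw [hadjy, Cg_apply]
    norm_num [show ((3 : Fin 4) : ℕ) = 3 from rfl]
    rw [mul_comm ((algebraMap O F ϖ) ^ 3) (algebraMap O F (Y.adjugate 3 3))]
    exact mul_inv_cancel_right₀ (pow_ne_zero 3 hπ) _
  have hmain : (alphaMat ϖ r h x * y.adjugate) 3 3 =
      (algebraMap O F ϖ) ^ k * algebraMap O F Y.det := by
    have hh1 : alphaMat ϖ r h x * y.adjugate = ((algebraMap O F ϖ) ^ k * y.det) • u := by
      rw [heq', Matrix.smul_mul, Matrix.mul_assoc, Matrix.mul_adjugate, Matrix.mul_smul,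
        Matrix.mul_one, smul_smul]
    rw [hh1, Matrix.smul_apply, hu33, smul_eq_mul, mul_one, hdety]
  have hsum : algebraMap O F (h 1 0) * y.adjugate 1 3 + algebraMap O F (h 1 1) * y.adjugate 3 3
      = (algebraMap O F ϖ) ^ k * algebraMap O F Y.det := by
    rw [← hmain, Matrix.mul_apply, Fin.sum_univ_four, ha30, ha31, ha32, ha33]
    ring
  rw [hadj13, hadj33] at hsum
  have hkey : (algebraMap O F ϖ) ^ (k + 2) * algebraMap O F Y.det =
      algebraMap O F (h 1 0 * Y.adjugate 1 3 + ϖ ^ 2 * (h 1 1 * Y.adjugate 3 3)) := by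
    rw [zpow_add₀ hπ, _root_.map_add, _root_.map_mul, _root_.map_mul, _root_.map_mul, _root_.map_pow,
      show ((2:ℤ)) = ((2:ℕ) : ℤ) by norm_num, zpow_natCast]
    have hp3 : (algebraMap O F ϖ) ^ (3:ℕ) ≠ 0 := pow_ne_zero _ hπ
    field_simp at hsum
    apply mul_left_cancel₀ hπ
    linear_combination (-(algebraMap O F ϖ)) * hsum
  have hk2 : -2 ≤ k := by
    by_contra hk
    push_neg at hk
    set n : ℕ := (-(k + 2)).toNat with hndef
    have hzero : (algebraMap O F ϖ) ^ (n : ℤ) * (algebraMap O F ϖ) ^ (k + 2) = 1 := by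
      rw [← zpow_add₀ hπ, show ((n : ℤ) + (k + 2)) = 0 by omega, zpow_zero]
    have hYeq : algebraMap O F Y.det =
        algebraMap O F (ϖ ^ n * (h 1 0 * Y.adjugate 1 3 + ϖ ^ 2 * (h 1 1 * Y.adjugate 3 3))) := by
      rw [_root_.map_mul, _root_.map_pow, ← hkey, ← mul_assoc, ← zpow_natCast (algebraMap O F ϖ) n, hzero,
        one_mul]
    have hYd := hinj hYeq
    have hdvd : ϖ ∣ Y.det := by
      rw [hYd]
      exact Dvd.dvd.mul_right (dvd_pow_self ϖ (by omega : n ≠ 0)) _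
    exact hϖ.not_isUnit (isUnit_of_dvd_unit hdvd hdetY)
  exact ⟨hk2, hk0⟩
end

section
/- Let y_{ij} ∈ O_F for 1 ≤ i,j ≤ 4 and let Y be the 4×4 matrix over F with rows (y_{11}, y_{12}, y_{13}ϖ^{-1}, y_{14}ϖ^{-1}), (y_{21}ϖ, y_{22}, y_{23}, y_{24}ϖ^{-1}), (y_{31}ϖ, y_{32}ϖ, y_{33}, y_{34}), (y_{41}ϖ^2, y_{42}ϖ, y_{43}ϖ, y_{44}). Then det(Y) ∈ O_F and det(Y) ≡ (y_{13}y_{31} − y_{11}y_{33})(y_{24}y_{42} − y_{22}y_{44}) modulo P_F. -/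
open Matrix IsLocalRing

set_option maxHeartbeats 1000000 in
private lemma detFinFour {R : Type*} [CommRing R] (M : Matrix (Fin 4) (Fin 4) R) :
    M.det =
      M 0 0 * (M 1 1 * (M 2 2 * M 3 3 - M 2 3 * M 3 2) - M 1 2 * (M 2 1 * M 3 3 - M 2 3 * M 3 1)
        + M 1 3 * (M 2 1 * M 3 2 - M 2 2 * M 3 1))
      - M 0 1 * (M 1 0 * (M 2 2 * M 3 3 - M 2 3 * M 3 2) - M 1 2 * (M 2 0 * M 3 3 - M 2 3 * M 3 0)
        + M 1 3 * (M 2 0 * M 3 2 - M 2 2 * M 3 0))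
      + M 0 2 * (M 1 0 * (M 2 1 * M 3 3 - M 2 3 * M 3 1) - M 1 1 * (M 2 0 * M 3 3 - M 2 3 * M 3 0)
        + M 1 3 * (M 2 0 * M 3 1 - M 2 1 * M 3 0))
      - M 0 3 * (M 1 0 * (M 2 1 * M 3 2 - M 2 2 * M 3 1) - M 1 1 * (M 2 0 * M 3 2 - M 2 2 * M 3 0)
        + M 1 2 * (M 2 0 * M 3 1 - M 2 1 * M 3 0)) := by
  simp [Matrix.det_succ_row_zero, Fin.sum_univ_succ,
    show (Fin.succAbove 2 2 : Fin 4) = 3 from rfl, show (Fin.succAbove 3 2 : Fin 4) = 2 from rfl,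
    show (Fin.succAbove 1 2 : Fin 4) = 3 from rfl,
    show (Fin.succ 2 : Fin 4) = 3 from rfl, show (Fin.castSucc 2 : Fin 4) = 2 from rfl]
  ring

theorem det_in_order_and_congruence
    {O : Type*} [CommRing O] [IsDomain O] [IsDiscreteValuationRing O] [CharZero O]
    {F : Type*} [Field F] [Algebra O F] [IsFractionRing O F]
    (ϖ : O) (hϖ : Irreducible ϖ)
    (y : Matrix (Fin 4) (Fin 4) O) :
    ∃ t : O,
      (!![algebraMap O F (y 0 0), algebraMap O F (y 0 1),
            algebraMap O F (y 0 2) * (algebraMap O F ϖ) ^ (-1 : ℤ),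
            algebraMap O F (y 0 3) * (algebraMap O F ϖ) ^ (-1 : ℤ);
          algebraMap O F (y 1 0) * algebraMap O F ϖ, algebraMap O F (y 1 1),
            algebraMap O F (y 1 2),
            algebraMap O F (y 1 3) * (algebraMap O F ϖ) ^ (-1 : ℤ);
          algebraMap O F (y 2 0) * algebraMap O F ϖ,
            algebraMap O F (y 2 1) * algebraMap O F ϖ, algebraMap O F (y 2 2),
            algebraMap O F (y 2 3);
          algebraMap O F (y 3 0) * algebraMap O F ϖ ^ 2,
            algebraMap O F (y 3 1) * algebraMap O F ϖ,
            algebraMap O F (y 3 2) * algebraMap O F ϖ,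
            algebraMap O F (y 3 3)] : Matrix (Fin 4) (Fin 4) F).det
          = algebraMap O F t ∧
      t - (y 0 2 * y 2 0 - y 0 0 * y 2 2) * (y 1 3 * y 3 1 - y 1 1 * y 3 3)
        ∈ maximalIdeal O := by
  set B : O :=
      - y 0 0 * y 1 1 * y 2 3 * y 3 2
      - y 0 0 * y 1 2 * y 2 1 * y 3 3
      + y 0 0 * y 1 2 * y 2 3 * y 3 1
      + y 0 0 * y 1 3 * y 2 1 * y 3 2
      - y 0 1 * y 1 0 * y 2 2 * y 3 3
      + y 0 1 * y 1 2 * y 2 0 * y 3 3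
      - y 0 1 * y 1 3 * y 2 0 * y 3 2
      + y 0 1 * y 1 3 * y 2 2 * y 3 0
      + y 0 2 * y 1 0 * y 2 1 * y 3 3
      - y 0 2 * y 1 0 * y 2 3 * y 3 1
      + y 0 2 * y 1 1 * y 2 3 * y 3 0
      - y 0 2 * y 1 3 * y 2 1 * y 3 0
      + y 0 3 * y 1 0 * y 2 2 * y 3 1
      + y 0 3 * y 1 1 * y 2 0 * y 3 2
      - y 0 3 * y 1 1 * y 2 2 * y 3 0
      - y 0 3 * y 1 2 * y 2 0 * y 3 1 with hB
  set C : O :=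
        y 0 1 * y 1 0 * y 2 3 * y 3 2
      - y 0 1 * y 1 2 * y 2 3 * y 3 0
      - y 0 3 * y 1 0 * y 2 1 * y 3 2
      + y 0 3 * y 1 2 * y 2 1 * y 3 0 with hC
  refine ⟨(y 0 2 * y 2 0 - y 0 0 * y 2 2) * (y 1 3 * y 3 1 - y 1 1 * y 3 3)
      + ϖ * B + ϖ ^ 2 * C, ?_, ?_⟩
  · have hπ : algebraMap O F ϖ ≠ 0 := by
      simpa using (IsFractionRing.injective O F).ne_iff.mpr hϖ.ne_zero
    rw [detFinFour]
    simp only [Matrix.of_apply, Matrix.cons_val', Matrix.cons_val_zero, Matrix.cons_val_one, Matrix.head_cons,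
      Matrix.empty_val', Matrix.cons_val_fin_one, Matrix.head_fin_const,
      Matrix.cons_val_two, Matrix.cons_val_three, Matrix.tail_cons,
      hB, hC, map_add, map_sub, _root_.map_mul, map_pow, map_neg, _root_.zpow_neg, zpow_one]
    field_simp
    ring
  · rw [hϖ.maximalIdeal_eq, Ideal.mem_span_singleton]
    exact ⟨B + ϖ * C, by ring⟩
end

section
/- Suppose h ∈ GL(2, O_F) is lower triangular, i.e. h_{12} = 0 with h_{11}, h_{22} ∈ O_F^× and h_{21} ∈ O_F. Suppose α(r,h,x) = u·y for some u ∈ N(4,F) and y = m·z ∈ J_f, where m = x_0 c·I_4 + x_1·σ_f with x_0, x_1 ∈ O_F, det(m) ∈ O_F^×, and z ∈ U^1. Then: r = 0; x ∈ P_F; h_{21} − x_1 ϖ ∈ P_F^2; h_{22} − (x_0 c + x_1 d) ∈ P_F (in particular x_0 c + x_1 d ∈ O_F^×); and h_{11}(x_0 c + x_1 d) − c(x_0^2 c + x_0 x_1 d − x_1^2) ∈ P_F. -/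
set_option linter.unusedSectionVars false
set_option maxHeartbeats 1000000


open Matrix Polynomial IsLocalRing

/-! ### Auxiliary lemmas -/

section kit
variable {O F : Type*} [CommRing O] [Field F] [Algebra O F] (ϖ : O)

theorem pAdd {n : ℤ} {a b : F} (ha : inPpow ϖ n a) (hb : inPpow ϖ n b) :
    inPpow ϖ n (a + b) := by
  obtain ⟨s, rfl⟩ := ha; obtain ⟨t, rfl⟩ := hb
  exact ⟨s + t, by rw [map_add]; ring⟩

theorem pNeg {n : ℤ} {a : F} (ha : inPpow ϖ n a) : inPpow ϖ n (-a) := by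
  obtain ⟨s, rfl⟩ := ha; exact ⟨-s, by rw [map_neg]; ring⟩

theorem pSub {n : ℤ} {a b : F} (ha : inPpow ϖ n a) (hb : inPpow ϖ n b) :
    inPpow ϖ n (a - b) := by
  rw [sub_eq_add_neg]; exact pAdd ϖ ha (pNeg ϖ hb)

theorem pMul (hne : algebraMap O F ϖ ≠ 0) {m n : ℤ} {a b : F}
    (ha : inPpow ϖ m a) (hb : inPpow ϖ n b) : inPpow ϖ (m + n) (a * b) := by
  obtain ⟨s, rfl⟩ := ha; obtain ⟨t, rfl⟩ := hb
  exact ⟨s * t, by rw [_root_.map_mul, zpow_add₀ hne]; ring⟩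

theorem pMul' (hne : algebraMap O F ϖ ≠ 0) {m n k : ℤ} {a b : F}
    (ha : inPpow ϖ m a) (hb : inPpow ϖ n b) (hk : m + n = k) : inPpow ϖ k (a * b) :=
  hk ▸ pMul ϖ hne ha hb

theorem pMapC (t : O) : inPpow (F := F) ϖ 0 (algebraMap O F t) := ⟨t, by simp⟩

theorem pMono (hne : algebraMap O F ϖ ≠ 0) {m n : ℤ} (hmn : m ≤ n) {a : F}
    (ha : inPpow ϖ n a) : inPpow ϖ m a := by
  obtain ⟨s, rfl⟩ := ha
  refine ⟨ϖ ^ (n - m).toNat * s, ?_⟩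
  rw [_root_.map_mul, map_pow, ← zpow_natCast (algebraMap O F ϖ) (n - m).toNat,
    Int.toNat_of_nonneg (by omega), ← mul_assoc, ← zpow_add₀ hne]
  ring_nf

theorem pUnitCancel {n : ℤ} {a : F} {w : O} (hw : IsUnit w)
    (h : inPpow ϖ n (a * algebraMap O F w)) : inPpow ϖ n a := by
  obtain ⟨s, hs⟩ := h
  obtain ⟨v, hv⟩ := hw.exists_right_inv
  refine ⟨s * v, ?_⟩
  have hwv : algebraMap O F w * algebraMap O F v = 1 := by
    rw [← _root_.map_mul, hv, _root_.map_one]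
  have : a = a * (algebraMap O F w * algebraMap O F v) := by rw [hwv, mul_one]
  rw [this, ← mul_assoc, hs, _root_.map_mul]; ring

theorem pDvd (hinj : Function.Injective (algebraMap O F)) {k : ℕ} {s : O}
    (h : inPpow ϖ (k : ℤ) (algebraMap O F s)) : ϖ ^ k ∣ s := by
  obtain ⟨t, ht⟩ := h
  refine ⟨t, hinj ?_⟩
  rw [ht, _root_.map_mul, map_pow, zpow_natCast]

theorem pOfDvd {k : ℕ} {s : O} (h : ϖ ^ k ∣ s) :
    inPpow (F := F) ϖ (k : ℤ) (algebraMap O F s) := by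
  obtain ⟨t, rfl⟩ := h
  exact ⟨t, by rw [_root_.map_mul, map_pow, zpow_natCast]⟩

end kit

theorem mulFinFour {α} [NonUnitalNonAssocSemiring α]
    (a₁₁ a₁₂ a₁₃ a₁₄ a₂₁ a₂₂ a₂₃ a₂₄ a₃₁ a₃₂ a₃₃ a₃₄ a₄₁ a₄₂ a₄₃ a₄₄
     b₁₁ b₁₂ b₁₃ b₁₄ b₂₁ b₂₂ b₂₃ b₂₄ b₃₁ b₃₂ b₃₃ b₃₄ b₄₁ b₄₂ b₄₃ b₄₄ : α) :
    !![a₁₁, a₁₂, a₁₃, a₁₄; a₂₁, a₂₂, a₂₃, a₂₄; a₃₁, a₃₂, a₃₃, a₃₄; a₄₁, a₄₂, a₄₃, a₄₄] *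
    !![b₁₁, b₁₂, b₁₃, b₁₄; b₂₁, b₂₂, b₂₃, b₂₄; b₃₁, b₃₂, b₃₃, b₃₄; b₄₁, b₄₂, b₄₃, b₄₄] =
    !![a₁₁*b₁₁ + a₁₂*b₂₁ + a₁₃*b₃₁ + a₁₄*b₄₁, a₁₁*b₁₂ + a₁₂*b₂₂ + a₁₃*b₃₂ + a₁₄*b₄₂,
       a₁₁*b₁₃ + a₁₂*b₂₃ + a₁₃*b₃₃ + a₁₄*b₄₃, a₁₁*b₁₄ + a₁₂*b₂₄ + a₁₃*b₃₄ + a₁₄*b₄₄;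
       a₂₁*b₁₁ + a₂₂*b₂₁ + a₂₃*b₃₁ + a₂₄*b₄₁, a₂₁*b₁₂ + a₂₂*b₂₂ + a₂₃*b₃₂ + a₂₄*b₄₂,
       a₂₁*b₁₃ + a₂₂*b₂₃ + a₂₃*b₃₃ + a₂₄*b₄₃, a₂₁*b₁₄ + a₂₂*b₂₄ + a₂₃*b₃₄ + a₂₄*b₄₄;
       a₃₁*b₁₁ + a₃₂*b₂₁ + a₃₃*b₃₁ + a₃₄*b₄₁, a₃₁*b₁₂ + a₃₂*b₂₂ + a₃₃*b₃₂ + a₃₄*b₄₂,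
       a₃₁*b₁₃ + a₃₂*b₂₃ + a₃₃*b₃₃ + a₃₄*b₄₃, a₃₁*b₁₄ + a₃₂*b₂₄ + a₃₃*b₃₄ + a₃₄*b₄₄;
       a₄₁*b₁₁ + a₄₂*b₂₁ + a₄₃*b₃₁ + a₄₄*b₄₁, a₄₁*b₁₂ + a₄₂*b₂₂ + a₄₃*b₃₂ + a₄₄*b₄₂,
       a₄₁*b₁₃ + a₄₂*b₂₃ + a₄₃*b₃₃ + a₄₄*b₄₃, a₄₁*b₁₄ + a₄₂*b₂₄ + a₄₃*b₃₄ + a₄₄*b₄₄] := by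
  ext i j
  fin_cases i <;> fin_cases j
    <;> simp [Matrix.mul_apply, Fin.sum_univ_succ, ← add_assoc]

theorem mMatf_eq {O F : Type*} [CommRing O] [Field F] [Algebra O F] (c d ϖ x0 x1 : O)
    (hne : algebraMap O F ϖ ≠ 0) :
    mMatf F c d ϖ x0 x1 =
    !![algebraMap O F (x0*c), 0, algebraMap O F (x1*c) * (algebraMap O F ϖ)⁻¹, 0;
       0, algebraMap O F (x0*c), 0, algebraMap O F (x1*c) * (algebraMap O F ϖ)⁻¹;
       algebraMap O F (x1*ϖ), 0, algebraMap O F (x0*c+x1*d), 0;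
       0, algebraMap O F (x1*ϖ), 0, algebraMap O F (x0*c+x1*d)] := by
  have h2 : (algebraMap O F ϖ) ^ (-2 : ℤ) = ((algebraMap O F ϖ)^2)⁻¹ := by
    rw [_root_.zpow_neg, zpow_two, sq]
  have h1 : (algebraMap O F ϖ) ^ (-1 : ℤ) = (algebraMap O F ϖ)⁻¹ := zpow_neg_one _
  rw [mMatf, sigmaf, betaf, pow_two, mulFinFour, h1, h2]
  ext i j
  fin_cases i <;> fin_cases j <;>
    simp [Matrix.one_apply, Matrix.smul_apply, Matrix.add_apply,
      _root_.map_mul, map_add] <;>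
    simp only [Algebra.smul_def, _root_.map_mul] <;> field_simp <;> ring

theorem mMatf_det {O F : Type*} [CommRing O] [Field F] [Algebra O F] (c d ϖ x0 x1 : O)
    (hne : algebraMap O F ϖ ≠ 0) :
    (mMatf F c d ϖ x0 x1).det =
      algebraMap O F ((c * (x0^2*c + x0*x1*d - x1^2))^2) := by
  rw [mMatf_eq c d ϖ x0 x1 hne]
  simp [Matrix.det_succ_row_zero, Fin.sum_univ_succ, Fin.succAbove, _root_.map_mul, map_add, map_sub, map_pow]
  field_simp
  ring

theorem middle_T0_decomposition
    {O : Type*} [CommRing O] [IsDomain O] [IsDiscreteValuationRing O] [CharZero O]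
    {F : Type*} [Field F] [Algebra O F] [IsFractionRing O F]
    (ϖ : O) (hϖ : Irreducible ϖ) (c d : O)
    (hf : Irreducible ((X ^ 2 - C d * X - C c : Polynomial O).map (residue O)))
    (r : ℤ) (h : Matrix (Fin 2) (Fin 2) O)
    (h12 : h 0 1 = 0) (h11 : IsUnit (h 0 0)) (h22 : IsUnit (h 1 1))
    (x : F) (u : Matrix (Fin 4) (Fin 4) F) (hu : IsUnipUpper u)
    (x0 x1 : O) (z : Matrix (Fin 4) (Fin 4) F) (hz : inU1f ϖ z)
    (hm : ∃ w : Oˣ, algebraMap O F (w : O) = (mMatf F c d ϖ x0 x1).det)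
    (heq : alphaMat ϖ r h x = u * (mMatf F c d ϖ x0 x1 * z)) :
    r = 0 ∧
    inPpow ϖ 1 x ∧
    h 1 0 - x1 * ϖ ∈ maximalIdeal O ^ 2 ∧
    h 1 1 - (x0 * c + x1 * d) ∈ maximalIdeal O ∧
    IsUnit (x0 * c + x1 * d) ∧
    h 0 0 * (x0 * c + x1 * d) - c * (x0 ^ 2 * c + x0 * x1 * d - x1 ^ 2) ∈ maximalIdeal O := by
  have hinj : Function.Injective (algebraMap O F) := IsFractionRing.injective O F
  have hπ0 : ϖ ≠ 0 := hϖ.ne_zero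
  have hne : algebraMap O F ϖ ≠ 0 := fun hc => hπ0 (hinj (by simpa using hc))
  obtain ⟨p, hp, rfl⟩ := hz
  rw [mMatf_eq c d ϖ x0 x1 hne] at heq
  -- abbreviations
  set π : F := algebraMap O F ϖ with hπdef
  -- unipotent entries
  have u10 : u 1 0 = 0 := hu.2 1 0 (by decide)
  have u20 : u 2 0 = 0 := hu.2 2 0 (by decide)
  have u21 : u 2 1 = 0 := hu.2 2 1 (by decide)
  have u30 : u 3 0 = 0 := hu.2 3 0 (by decide)
  have u31 : u 3 1 = 0 := hu.2 3 1 (by decide)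
  have u32 : u 3 2 = 0 := hu.2 3 2 (by decide)
  have udiag := hu.1
  have E31 : algebraMap O F (h 1 0) =
      algebraMap O F (x1*ϖ) * (1 + p 1 1) + algebraMap O F (x0*c+x1*d) * p 3 1 := by
    have E := congrFun (congrFun heq 3) 1
    simp [alphaMat, Matrix.mul_apply, Matrix.vecMul, dotProduct,
      Fin.sum_univ_four, Matrix.add_apply, Matrix.one_apply, u30, u31, u32, udiag, h12] at E
    linear_combination (norm := (simp only [_root_.map_mul, map_add]; ring1)) E
  have E32 : (0:F) =
      algebraMap O F (x1*ϖ) * p 1 2 + algebraMap O F (x0*c+x1*d) * p 3 2 := by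
    have E := congrFun (congrFun heq 3) 2
    simp [alphaMat, Matrix.mul_apply, Matrix.vecMul, dotProduct,
      Fin.sum_univ_four, Matrix.add_apply, Matrix.one_apply, u30, u31, u32, udiag, h12] at E
    linear_combination (norm := (simp only [_root_.map_mul, map_add]; ring1)) E
  have E33 : algebraMap O F (h 1 1) =
      algebraMap O F (x1*ϖ) * p 1 3 + algebraMap O F (x0*c+x1*d) * (1 + p 3 3) := by
    have E := congrFun (congrFun heq 3) 3
    simp [alphaMat, Matrix.mul_apply, Matrix.vecMul, dotProduct,
      Fin.sum_univ_four, Matrix.add_apply, Matrix.one_apply, u30, u31, u32, udiag, h12] at E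
    linear_combination (norm := (simp only [_root_.map_mul, map_add]; ring1)) E
  have E21 : algebraMap O F (h 0 0) * x * (algebraMap O F ϖ)^r =
      algebraMap O F (x1*ϖ) * p 0 1 + algebraMap O F (x0*c+x1*d) * p 2 1
        + u 2 3 * (algebraMap O F (x1*ϖ) * (1 + p 1 1) + algebraMap O F (x0*c+x1*d) * p 3 1) := by
    have E := congrFun (congrFun heq 2) 1
    simp [alphaMat, Matrix.mul_apply, Matrix.vecMul, dotProduct,
      Fin.sum_univ_four, Matrix.add_apply, Matrix.one_apply, u20, u21, udiag, h12] at E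
    linear_combination (norm := (simp only [_root_.map_mul, map_add]; ring1)) E
  have E22 : algebraMap O F (h 1 1) =
      algebraMap O F (x1*ϖ) * p 0 2 + algebraMap O F (x0*c+x1*d) * (1 + p 2 2)
        + u 2 3 * (algebraMap O F (x1*ϖ) * p 1 2 + algebraMap O F (x0*c+x1*d) * p 3 2) := by
    have E := congrFun (congrFun heq 2) 2
    simp [alphaMat, Matrix.mul_apply, Matrix.vecMul, dotProduct,
      Fin.sum_univ_four, Matrix.add_apply, Matrix.one_apply, u20, u21, udiag, h12] at E
    linear_combination (norm := (simp only [_root_.map_mul, map_add]; ring1)) E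
  have E23 : (0:F) =
      algebraMap O F (x1*ϖ) * p 0 3 + algebraMap O F (x0*c+x1*d) * p 2 3
        + u 2 3 * (algebraMap O F (x1*ϖ) * p 1 3 + algebraMap O F (x0*c+x1*d) * (1 + p 3 3)) := by
    have E := congrFun (congrFun heq 2) 3
    simp [alphaMat, Matrix.mul_apply, Matrix.vecMul, dotProduct,
      Fin.sum_univ_four, Matrix.add_apply, Matrix.one_apply, u20, u21, udiag, h12] at E
    linear_combination (norm := (simp only [_root_.map_mul, map_add]; ring1)) E
  have E11 : algebraMap O F (h 0 0) * (algebraMap O F ϖ)^r =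
      algebraMap O F (x0*c) * (1 + p 1 1) + algebraMap O F (x1*c) * (algebraMap O F ϖ)⁻¹ * p 3 1
        + u 1 2 * (algebraMap O F (x1*ϖ) * p 0 1 + algebraMap O F (x0*c+x1*d) * p 2 1)
        + u 1 3 * (algebraMap O F (x1*ϖ) * (1 + p 1 1) + algebraMap O F (x0*c+x1*d) * p 3 1) := by
    have E := congrFun (congrFun heq 1) 1
    simp [alphaMat, Matrix.mul_apply, Matrix.vecMul, dotProduct,
      Fin.sum_univ_four, Matrix.add_apply, Matrix.one_apply, u10, udiag, h12] at E
    linear_combination (norm := (simp only [_root_.map_mul, map_add]; ring1)) E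
  have E12 : (0:F) =
      algebraMap O F (x0*c) * p 1 2 + algebraMap O F (x1*c) * (algebraMap O F ϖ)⁻¹ * p 3 2
        + u 1 2 * (algebraMap O F (x1*ϖ) * p 0 2 + algebraMap O F (x0*c+x1*d) * (1 + p 2 2))
        + u 1 3 * (algebraMap O F (x1*ϖ) * p 1 2 + algebraMap O F (x0*c+x1*d) * p 3 2) := by
    have E := congrFun (congrFun heq 1) 2
    simp [alphaMat, Matrix.mul_apply, Matrix.vecMul, dotProduct,
      Fin.sum_univ_four, Matrix.add_apply, Matrix.one_apply, u10, udiag, h12] at E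
    linear_combination (norm := (simp only [_root_.map_mul, map_add]; ring1)) E
  have E13 : (0:F) =
      algebraMap O F (x0*c) * p 1 3 + algebraMap O F (x1*c) * (algebraMap O F ϖ)⁻¹ * (1 + p 3 3)
        + u 1 2 * (algebraMap O F (x1*ϖ) * p 0 3 + algebraMap O F (x0*c+x1*d) * p 2 3)
        + u 1 3 * (algebraMap O F (x1*ϖ) * p 1 3 + algebraMap O F (x0*c+x1*d) * (1 + p 3 3)) := by
    have E := congrFun (congrFun heq 1) 3
    simp [alphaMat, Matrix.mul_apply, Matrix.vecMul, dotProduct,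
      Fin.sum_univ_four, Matrix.add_apply, Matrix.one_apply, u10, udiag, h12] at E
    linear_combination (norm := (simp only [_root_.map_mul, map_add]; ring1)) E
  -- p memberships
  have hp01 : inPpow ϖ 0 (p 0 1) := by simpa [eMatf] using hp 0 1
  have hp02 : inPpow ϖ 0 (p 0 2) := by simpa [eMatf] using hp 0 2
  have hp03 : inPpow ϖ (-1) (p 0 3) := by simpa [eMatf] using hp 0 3
  have hp11 : inPpow ϖ 1 (p 1 1) := by simpa [eMatf] using hp 1 1
  have hp12 : inPpow ϖ 0 (p 1 2) := by simpa [eMatf] using hp 1 2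
  have hp13 : inPpow ϖ 0 (p 1 3) := by simpa [eMatf] using hp 1 3
  have hp21 : inPpow ϖ 1 (p 2 1) := by simpa [eMatf] using hp 2 1
  have hp22 : inPpow ϖ 1 (p 2 2) := by simpa [eMatf] using hp 2 2
  have hp23 : inPpow ϖ 0 (p 2 3) := by simpa [eMatf] using hp 2 3
  have hp31 : inPpow ϖ 2 (p 3 1) := by simpa [eMatf] using hp 3 1
  have hp32 : inPpow ϖ 1 (p 3 2) := by simpa [eMatf] using hp 3 2
  have hp33 : inPpow ϖ 1 (p 3 3) := by simpa [eMatf] using hp 3 3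
  -- basic memberships
  have hC2 : inPpow ϖ 1 (algebraMap O F (x1*ϖ)) :=
    ⟨x1, by rw [_root_.map_mul, zpow_one]; ring⟩
  have hB : inPpow ϖ (-1) (algebraMap O F (x1*c) * (algebraMap O F ϖ)⁻¹) :=
    ⟨x1*c, by rw [_root_.zpow_neg_one]; ring⟩
  have hAf : inPpow ϖ 0 (algebraMap O F (x0*c+x1*d)) := pMapC ϖ _
  have hX0C : inPpow ϖ 0 (algebraMap O F (x0*c)) := pMapC ϖ _
  -- conclusion 3 material
  have hmax : maximalIdeal O = Ideal.span {ϖ} :=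
    (IsDiscreteValuationRing.irreducible_iff_uniformizer ϖ).mp hϖ
  have k31 : inPpow ϖ ((2:ℕ):ℤ) (algebraMap O F (h 1 0 - x1*ϖ)) := by
    rw [map_sub]
    have : algebraMap O F (h 1 0) - algebraMap O F (x1*ϖ) =
        algebraMap O F (x1*ϖ) * p 1 1 + algebraMap O F (x0*c+x1*d) * p 3 1 := by
      linear_combination E31
    rw [this]
    exact pAdd ϖ (pMul' ϖ hne hC2 hp11 (by norm_num)) (pMul' ϖ hne hAf hp31 (by norm_num))
  obtain ⟨t1, ht1⟩ := pDvd ϖ hinj k31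
  have concl3 : h 1 0 - x1 * ϖ ∈ maximalIdeal O ^ 2 := by
    rw [hmax, Ideal.span_singleton_pow, Ideal.mem_span_singleton]
    exact ⟨t1, ht1⟩
  -- conclusion 4 material
  have k33 : inPpow ϖ ((1:ℕ):ℤ) (algebraMap O F (h 1 1 - (x0*c+x1*d))) := by
    rw [map_sub]
    have : algebraMap O F (h 1 1) - algebraMap O F (x0*c+x1*d) =
        algebraMap O F (x1*ϖ) * p 1 3 + algebraMap O F (x0*c+x1*d) * p 3 3 := by
      linear_combination E33
    rw [this]
    exact pAdd ϖ (pMul' ϖ hne hC2 hp13 (by norm_num)) (pMul' ϖ hne hAf hp33 (by norm_num))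
  obtain ⟨t2, ht2⟩ := pDvd ϖ hinj k33
  rw [pow_one] at ht2
  have concl4 : h 1 1 - (x0 * c + x1 * d) ∈ maximalIdeal O := by
    rw [hmax, Ideal.mem_span_singleton]
    exact ⟨t2, ht2⟩
  -- conclusion 5
  have hϖnotunit : ¬ IsUnit ϖ := hϖ.not_isUnit
  have concl5 : IsUnit (x0 * c + x1 * d) := by
    by_contra hA
    have hmem : h 1 1 ∈ nonunits O := by
      have hh : h 1 1 = (x0*c+x1*d) + ϖ * t2 := by linear_combination ht2
      rw [hh]
      exact nonunits_add (mem_nonunits_iff.mpr hA)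
        (mem_nonunits_iff.mpr (fun hu' => hϖnotunit (isUnit_of_mul_isUnit_left hu')))
    exact (mem_nonunits_iff.mp hmem) h22
  -- units c and Δ
  obtain ⟨w, hw⟩ := hm
  have hcdw : (c * (x0^2*c + x0*x1*d - x1^2))^2 = (w : O) := by
    apply hinj
    rw [← mMatf_det c d ϖ x0 x1 hne, hw]
  have hcdu : IsUnit (c * (x0^2*c + x0*x1*d - x1^2)) := by
    have h2 : IsUnit ((c * (x0^2*c + x0*x1*d - x1^2))^2) := hcdw ▸ w.isUnit
    exact (isUnit_pow_iff (two_ne_zero)).mp h2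
  -- memberships of u entries
  have hu23eq : u 2 3 * algebraMap O F (h 1 1) =
      -(algebraMap O F (x1*ϖ) * p 0 3 + algebraMap O F (x0*c+x1*d) * p 2 3) := by
    linear_combination u 2 3 * E33 - E23
  have hu23 : inPpow ϖ 0 (u 2 3) := by
    apply pUnitCancel ϖ h22
    rw [hu23eq]
    exact pNeg ϖ (pAdd ϖ (pMul' ϖ hne hC2 hp03 (by norm_num))
      (pMul' ϖ hne hAf hp23 (by norm_num)))
  have hu12eq : u 1 2 * algebraMap O F (h 1 1) =
      -(algebraMap O F (x0*c) * p 1 2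
        + algebraMap O F (x1*c) * (algebraMap O F ϖ)⁻¹ * p 3 2) := by
    linear_combination u 1 2 * E22 - E12 + (u 1 3 - u 1 2 * u 2 3) * E32
  have hu12 : inPpow ϖ 0 (u 1 2) := by
    apply pUnitCancel ϖ h22
    rw [hu12eq]
    exact pNeg ϖ (pAdd ϖ (pMul' ϖ hne hX0C hp12 (by norm_num))
      (pMul' ϖ hne hB hp32 (by norm_num)))
  have hU13eq : u 1 3 * algebraMap O F (h 1 1) =
      -(algebraMap O F (x0*c) * p 1 3
        + algebraMap O F (x1*c) * (algebraMap O F ϖ)⁻¹ * (1 + p 3 3)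
        + u 1 2 * (algebraMap O F (x1*ϖ) * p 0 3 + algebraMap O F (x0*c+x1*d) * p 2 3)) := by
    linear_combination u 1 3 * E33 - E13
  -- A (h 1 0) is in P^1
  have hh10dvd : ϖ ∣ h 1 0 := ⟨x1 + ϖ * t1, by linear_combination ht1⟩
  have hAh10P1 : inPpow ϖ ((1:ℕ):ℤ) (algebraMap O F (h 1 0)) := pOfDvd ϖ (by
    rw [pow_one]; exact hh10dvd)
  have hAh10P1' : inPpow ϖ 1 (algebraMap O F (h 1 0)) := by exact_mod_cast hAh10P1
  have Eht1 : algebraMap O F (h 1 0) =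
      algebraMap O F (x1*ϖ) + (algebraMap O F ϖ)^2 * algebraMap O F t1 := by
    have : h 1 0 = x1*ϖ + ϖ^2*t1 := by linear_combination ht1
    rw [this]
    simp only [map_add, _root_.map_mul, map_pow]
  -- the key equation
  have EkeyEq : algebraMap O F (h 0 0) * (algebraMap O F ϖ)^r * algebraMap O F (h 1 1)
      - algebraMap O F (x0*c*(h 1 1) - x1*(x1*c)) =
      algebraMap O F (x0*c) * p 1 1 * algebraMap O F (h 1 1)
      + algebraMap O F (x1*c) * (algebraMap O F ϖ)⁻¹ * p 3 1 * algebraMap O F (h 1 1)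
      + u 1 2 * (algebraMap O F (x1*ϖ) * p 0 1 + algebraMap O F (x0*c+x1*d) * p 2 1)
          * algebraMap O F (h 1 1)
      + (-((algebraMap O F (x0*c) * p 1 3
          + u 1 2 * (algebraMap O F (x1*ϖ) * p 0 3 + algebraMap O F (x0*c+x1*d) * p 2 3))
          * algebraMap O F (h 1 0)))
      + (-(algebraMap O F (x1*c) * (algebraMap O F ϖ)⁻¹ * p 3 3 * algebraMap O F (h 1 0)))
      + (-(algebraMap O F (x1*c) * (algebraMap O F ϖ)⁻¹
          * ((algebraMap O F ϖ)^2 * algebraMap O F t1))) := by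
    linear_combination (norm := (simp only [_root_.map_mul, map_add, map_sub, map_pow]; field_simp [(show algebraMap O F ϖ ≠ 0 from hne)]; ring1))
      algebraMap O F (h 1 1) * E11 - (u 1 3 * algebraMap O F (h 1 1)) * E31
        + algebraMap O F (h 1 0) * hU13eq
        - (algebraMap O F (x1*c) * (algebraMap O F ϖ)⁻¹) * Eht1
  have Hkey : inPpow ϖ 1 (algebraMap O F (h 0 0) * (algebraMap O F ϖ)^r
      * algebraMap O F (h 1 1) - algebraMap O F (x0*c*(h 1 1) - x1*(x1*c))) := by
    rw [EkeyEq]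
    refine pAdd ϖ (pAdd ϖ (pAdd ϖ (pAdd ϖ (pAdd ϖ ?_ ?_) ?_) ?_) ?_) ?_
    · have h1 : inPpow ϖ 1 (algebraMap O F (x0*c) * p 1 1) := pMul' ϖ hne hX0C hp11 (by norm_num)
      exact pMul' ϖ hne h1 (pMapC ϖ _) (by norm_num)
    · have h1 : inPpow ϖ 1 (algebraMap O F (x1*c) * (algebraMap O F ϖ)⁻¹ * p 3 1) :=
        pMul' ϖ hne hB hp31 (by norm_num)
      exact pMul' ϖ hne h1 (pMapC ϖ _) (by norm_num)
    · have ha : inPpow ϖ 1 (algebraMap O F (x1*ϖ) * p 0 1) := pMul' ϖ hne hC2 hp01 (by norm_num)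
      have hb : inPpow ϖ 1 (algebraMap O F (x0*c+x1*d) * p 2 1) := pMul' ϖ hne hAf hp21 (by norm_num)
      have h1 : inPpow ϖ 1 (u 1 2 * (algebraMap O F (x1*ϖ) * p 0 1
          + algebraMap O F (x0*c+x1*d) * p 2 1)) := pMul' ϖ hne hu12 (pAdd ϖ ha hb) (by norm_num)
      exact pMul' ϖ hne h1 (pMapC ϖ _) (by norm_num)
    · have ha : inPpow ϖ 0 (algebraMap O F (x0*c) * p 1 3) := pMul' ϖ hne hX0C hp13 (by norm_num)
      have hb1 : inPpow ϖ 0 (algebraMap O F (x1*ϖ) * p 0 3) := pMul' ϖ hne hC2 hp03 (by norm_num)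
      have hb2 : inPpow ϖ 0 (algebraMap O F (x0*c+x1*d) * p 2 3) := pMul' ϖ hne hAf hp23 (by norm_num)
      have hb : inPpow ϖ 0 (u 1 2 * (algebraMap O F (x1*ϖ) * p 0 3
          + algebraMap O F (x0*c+x1*d) * p 2 3)) := pMul' ϖ hne hu12 (pAdd ϖ hb1 hb2) (by norm_num)
      exact pNeg ϖ (pMul' ϖ hne (pAdd ϖ ha hb) hAh10P1' (by norm_num))
    · have h1 : inPpow ϖ 0 (algebraMap O F (x1*c) * (algebraMap O F ϖ)⁻¹ * p 3 3) :=
        pMul' ϖ hne hB hp33 (by norm_num)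
      exact pNeg ϖ (pMul' ϖ hne h1 hAh10P1' (by norm_num))
    · have h2 : inPpow ϖ 2 ((algebraMap O F ϖ)^2 * algebraMap O F t1) :=
        ⟨t1, by rw [zpow_two]; ring⟩
      exact pNeg ϖ (pMul' ϖ hne hB h2 (by norm_num))
  obtain ⟨t4, ht4⟩ := Hkey
  rw [zpow_one] at ht4
  -- ht4 : LHS - A G0 = π * A t4
  have hstar : algebraMap O F (h 0 0) * (algebraMap O F ϖ)^r * algebraMap O F (h 1 1) =
      algebraMap O F (x0*c*(h 1 1) - x1*(x1*c)) + algebraMap O F ϖ * algebraMap O F t4 := by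
    linear_combination ht4
  -- r ≥ 0
  have hr0 : 0 ≤ r := by
    by_contra hrneg
    push_neg at hrneg
    set n : ℕ := (-r).toNat with hndef
    have hn1 : 1 ≤ n := by omega
    have hrn : r = -(n : ℤ) := by omega
    have hp2 : (algebraMap O F ϖ)^r * (algebraMap O F ϖ)^n = 1 := by
      rw [← zpow_natCast (algebraMap O F ϖ) n, ← zpow_add₀ hne, hrn]
      simp
    have hOeq : algebraMap O F (h 0 0 * h 1 1) =
        algebraMap O F (ϖ^n * (x0*c*(h 1 1) - x1*(x1*c) + ϖ * t4)) := by
      linear_combination (norm := (simp only [_root_.map_mul, map_add, map_sub, map_pow]; ring1))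
        (algebraMap O F ϖ)^n * hstar
          - (algebraMap O F (h 0 0) * algebraMap O F (h 1 1)) * hp2
    have hO : h 0 0 * h 1 1 = ϖ^n * (x0*c*(h 1 1) - x1*(x1*c) + ϖ * t4) := hinj hOeq
    have : IsUnit ϖ := by
      apply isUnit_of_dvd_unit ?_ (h11.mul h22)
      rw [hO]
      exact Dvd.dvd.mul_right (dvd_pow_self ϖ (by omega)) _
    exact hϖnotunit this
  -- write r as a natural number
  set n : ℕ := r.toNat with hndef
  have hrn : r = (n : ℤ) := by omega
  have hzr : (algebraMap O F ϖ)^r = (algebraMap O F ϖ)^(n:ℕ) := by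
    rw [hrn, zpow_natCast]
  have hOeq2 : algebraMap O F (h 0 0 * ϖ^n * h 1 1) =
      algebraMap O F (x0*c*(h 1 1) - x1*(x1*c) + ϖ * t4) := by
    linear_combination (norm := (simp only [_root_.map_mul, map_add, map_sub, map_pow]; ring1))
      hstar - (algebraMap O F (h 0 0) * algebraMap O F (h 1 1)) * hzr
  have hO2 : h 0 0 * ϖ^n * h 1 1 = x0*c*(h 1 1) - x1*(x1*c) + ϖ * t4 := hinj hOeq2
  have hO3 : h 0 0 * ϖ^n * h 1 1 =
      c * (x0^2*c + x0*x1*d - x1^2) + ϖ * (x0*c*t2 + t4) := by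
    have hh11 : h 1 1 = (x0*c+x1*d) + ϖ * t2 := by linear_combination ht2
    calc h 0 0 * ϖ^n * h 1 1 = x0*c*(h 1 1) - x1*(x1*c) + ϖ * t4 := hO2
      _ = x0*c*((x0*c+x1*d) + ϖ * t2) - x1*(x1*c) + ϖ * t4 := by rw [← hh11]
      _ = c * (x0^2*c + x0*x1*d - x1^2) + ϖ * (x0*c*t2 + t4) := by ring
  have hn0 : n = 0 := by
    by_contra hn
    have : IsUnit ϖ := by
      apply isUnit_of_dvd_unit ?_ hcdu
      refine ⟨h 0 0 * ϖ^(n-1) * h 1 1 - (x0*c*t2 + t4), ?_⟩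
      have hpowsplit : ϖ^n = ϖ * ϖ^(n-1) := by
        conv_lhs => rw [show n = 1 + (n-1) by omega]
        rw [pow_add, pow_one]
      linear_combination (h 0 0 * h 1 1) * hpowsplit - hO3
    exact hϖnotunit this
  have concl1 : r = 0 := by omega
  -- conclusion 6
  have concl6 : h 0 0 * (x0 * c + x1 * d) - c * (x0 ^ 2 * c + x0 * x1 * d - x1 ^ 2)
      ∈ maximalIdeal O := by
    rw [hmax, Ideal.mem_span_singleton]
    refine ⟨x0*c*t2 + t4 - h 0 0 * t2, ?_⟩
    have hO4 : h 0 0 * h 1 1 = c * (x0^2*c + x0*x1*d - x1^2) + ϖ * (x0*c*t2 + t4) := by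
      have := hO3
      rw [hn0, pow_zero, mul_one] at this
      linear_combination this
    linear_combination hO4 - h 0 0 * ht2
  -- conclusion 2
  have concl2 : inPpow ϖ 1 x := by
    apply pUnitCancel ϖ h11
    have hx : x * algebraMap O F (h 0 0) =
        algebraMap O F (x1*ϖ) * p 0 1 + algebraMap O F (x0*c+x1*d) * p 2 1
          + u 2 3 * algebraMap O F (h 1 0) := by
      have hr0' : (algebraMap O F ϖ)^r = 1 := by rw [concl1, zpow_zero]
      have E21' := E21
      rw [hr0', mul_one] at E21'
      linear_combination E21' - u 2 3 * E31
    rw [hx]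
    refine pAdd ϖ (pAdd ϖ (pMul' ϖ hne hC2 hp01 (by norm_num))
      (pMul' ϖ hne hAf hp21 (by norm_num))) ?_
    exact pMul' ϖ hne hu23 hAh10P1' (by norm_num)
  exact ⟨concl1, concl2, concl3, concl4, concl5, concl6⟩
end
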